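/- arXiv:0705.2576 — 2 statements merged into one kernel-verified Lean document; each statement's English description precedes it below -/
import Mathlib

section
/- Let t be a regular operator between Hilbert C*-modules E and F. Then t has closed range if and only if Ker(t) is orthogonally complemented in E and t is bounded below on Ker(t)^⊥ ∩ Dom(t), i.e. there is c > 0 with ‖tx‖ ≥ c‖x‖ for all x ∈ Ker(t)^⊥ ∩ Dom(t). -/
/- Framework: Hilbert C*-modules over a C*-algebra `A` (via Mathlib's `CStarModule`),
densely defined operators as `LinearPMap`s, `A`-valued orthogonality, adjoints,
regularity, graphs inside `E ⊕ F`. -/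

open scoped InnerProductSpace RightActions WithCStarModule

namespace RegularOperators

variable (A : Type*) [NonUnitalCStarAlgebra A] [PartialOrder A] [StarOrderedRing A]

section Defs

variable {E F : Type*}
  [NormedAddCommGroup E] [Module ℂ E] [SMul A E] [CStarModule A E]
  [NormedAddCommGroup F] [Module ℂ F] [SMul A F] [CStarModule A F]

/-- Orthogonal complement of a subset w.r.t. the `A`-valued inner product. -/
def ortho (S : Set E) : Set E := {y | ∀ u ∈ S, ⟪u, y⟫_A = 0}

/-- `S` is orthogonally complemented (an orthogonal summand): every element of `E`
decomposes as a sum of an element of `S` and an element of `S^⊥`. -/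
def OrthoComplemented (S : Set E) : Prop := ∀ z : E, ∃ u ∈ S, ∃ v ∈ ortho A S, z = u + v

/-- A partially defined operator is `A`-linear (for the right `A`-module action). -/
def AModuleMap (t : E →ₗ.[ℂ] F) : Prop :=
  ∀ (a : A) (x : t.domain), ∃ hx : a • (x : E) ∈ t.domain, t ⟨a • (x : E), hx⟩ = a • (t x)

/-- Kernel of a partially defined operator, as a subset of `E`. -/
def kerSet (t : E →ₗ.[ℂ] F) : Set E := {x | ∃ hx : x ∈ t.domain, t ⟨x, hx⟩ = 0}

/-- Range of a partially defined operator. -/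
def ranSet (t : E →ₗ.[ℂ] F) : Set F := {y | ∃ x : t.domain, t x = y}

/-- Domain of the adjoint: those `y` for which some `z` satisfies `⟪tx, y⟫ = ⟪x, z⟫`
for all `x` in the domain of `t`. -/
def adjDomain (t : E →ₗ.[ℂ] F) : Set F :=
  {y | ∃ z : E, ∀ x : t.domain, ⟪t x, y⟫_A = ⟪(x : E), z⟫_A}

/-- `s` is the adjoint operator `t*` of `t`. -/
structure IsAdjoint (t : E →ₗ.[ℂ] F) (s : F →ₗ.[ℂ] E) : Prop where
  dom : (s.domain : Set F) = adjDomain A t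
  inner_eq : ∀ (x : t.domain) (y : s.domain), ⟪t x, (y : F)⟫_A = ⟪(x : E), s y⟫_A

/-- The range of `1 + t*t` (where `s` plays the role of `t*`). -/
def onePlusRange (t : E →ₗ.[ℂ] F) (s : F →ₗ.[ℂ] E) : Set E :=
  {u | ∃ (x : t.domain) (h : t x ∈ s.domain), (x : E) + s ⟨t x, h⟩ = u}

/-- `t` is a regular operator with adjoint `s`: it is `A`-linear, densely defined,
closed, adjointable with densely defined adjoint, and `1 + t*t` has dense range. -/
structure IsRegular (t : E →ₗ.[ℂ] F) (s : F →ₗ.[ℂ] E) : Prop where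
  amod : AModuleMap A t
  denseDom : Dense (t.domain : Set E)
  closedGraph : IsClosed (t.graph : Set (E × F))
  adj : IsAdjoint A t s
  denseAdjDom : Dense (s.domain : Set F)
  denseOnePlusRange : Dense (onePlusRange t s)

/-- The graph of `t` inside the Hilbert `A`-module `E ⊕ F`. -/
def graphSet (t : E →ₗ.[ℂ] F) : Set (C⋆ᵐᵒᵈ(A, E × F)) :=
  {w | ∃ x : t.domain, WithCStarModule.equiv A (E × F) w = ((x : E), t x)}

/-- The range of `P_F ∘ P_{G(t)^⊥}`, i.e. the image of `G(t)^⊥ ⊆ E ⊕ F` under the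
canonical projection onto `F`. -/
def pfRange (t : E →ₗ.[ℂ] F) : Set F :=
  {y | ∃ w ∈ ortho A (graphSet A t), (WithCStarModule.equiv A (E × F) w).2 = y}

end Defs

end RegularOperators

open RegularOperators
variable {A : Type*} [NonUnitalCStarAlgebra A] [PartialOrder A] [StarOrderedRing A]
variable {E F : Type*}
  [NormedAddCommGroup E] [Module ℂ E] [SMul A E] [CStarModule A E] [CompleteSpace E]
  [NormedAddCommGroup F] [Module ℂ F] [SMul A F] [CStarModule A F] [CompleteSpace F]

set_option linter.unusedSectionVars false
set_option maxHeartbeats 1000000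

open CStarModule Filter Topology

section AuxDev

include A in
lemma my_cont_inner_right (u : E) : Continuous fun z : E => ⟪u, z⟫_A := by
  apply (LipschitzWith.of_dist_le_mul (K := ‖u‖₊) ?_).continuous
  intro z z'
  rw [dist_eq_norm, dist_eq_norm, ← CStarModule.inner_sub_right]
  exact CStarModule.norm_inner_le E

include A in
lemma my_cont_inner_left (u : E) : Continuous fun z : E => ⟪z, u⟫_A := by
  have : (fun z : E => ⟪z, u⟫_A) = fun z => star ⟪u, z⟫_A := by
    ext z; rw [CStarModule.star_inner]
  rw [this]
  exact continuous_star.comp (my_cont_inner_right u)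

include A in
lemma my_norm_smul_real (μ : ℝ) (x : E) : ‖(μ:ℂ) • x‖ = |μ| * ‖x‖ := by
  have h1 : ‖(μ:ℂ) • x‖ ^ 2 = ‖⟪(μ:ℂ) • x, (μ:ℂ) • x⟫_A‖ := CStarModule.norm_sq_eq A
  have h2 : ‖x‖ ^ 2 = ‖⟪x, x⟫_A‖ := CStarModule.norm_sq_eq A
  have h3 : ⟪(μ:ℂ) • x, (μ:ℂ) • x⟫_A = ((μ:ℂ) * (μ:ℂ)) • ⟪x, x⟫_A := by
    rw [CStarModule.inner_smul_right_complex, CStarModule.inner_smul_left_complex, smul_smul]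
    norm_num
  have h4 : ‖(μ:ℂ) • x‖ ^ 2 = (|μ| * ‖x‖) ^ 2 := by
    rw [h1, h3, norm_smul]
    simp only [← Complex.ofReal_mul, Complex.norm_real, mul_pow, sq_abs, abs_mul, ← h2]
    rw [Real.norm_eq_abs, abs_mul, ← sq_abs]
    simp [sq_abs, abs_norm]
    left; ring
  have := congrArg Real.sqrt h4
  rwa [Real.sqrt_sq (norm_nonneg _), Real.sqrt_sq (by positivity)] at this

include A in
/-- An element orthogonal to a dense submodule is zero. -/
lemma my_dense_sep {S : Set E} (hd : Dense S) {d : E}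
    (h : ∀ z ∈ S, ⟪z, d⟫_A = 0) : d = 0 := by
  have hcont : Continuous fun z : E => ⟪z, d⟫_A := my_cont_inner_left d
  have heq : (fun z : E => ⟪z, d⟫_A) = fun _ => (0 : A) :=
    Continuous.ext_on hd hcont continuous_const h
  have : ⟪d, d⟫_A = 0 := congrFun heq d
  exact CStarModule.inner_self.mp this

/-- The graph of the adjoint is closed (sequential form). -/
lemma my_adj_closed (t : E →ₗ.[ℂ] F) (s : F →ₗ.[ℂ] E) (ht : IsRegular A t s)
    {y : F} {e : E} (yn : ℕ → s.domain)
    (h1 : Tendsto (fun n => ((yn n : F))) atTop (nhds y))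
    (h2 : Tendsto (fun n => s (yn n)) atTop (nhds e)) :
    ∃ hy : y ∈ s.domain, s ⟨y, hy⟩ = e := by
  have hyd : y ∈ adjDomain A t := by
    refine ⟨e, fun x => ?_⟩
    have k1 : Tendsto (fun n => ⟪t x, ((yn n : F))⟫_A) atTop (nhds ⟪t x, y⟫_A) :=
      ((my_cont_inner_right (t x)).tendsto y).comp h1
    have k2 : Tendsto (fun n => ⟪(x : E), s (yn n)⟫_A) atTop (nhds ⟪(x : E), e⟫_A) :=
      ((my_cont_inner_right (x : E)).tendsto e).comp h2
    have : (fun n => ⟪t x, ((yn n : F))⟫_A) = fun n => ⟪(x : E), s (yn n)⟫_A := by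
      funext n; exact ht.adj.inner_eq x (yn n)
    rw [this] at k1
    exact tendsto_nhds_unique k1 k2
  have hy : y ∈ s.domain := by rw [← SetLike.mem_coe, ht.adj.dom]; exact hyd
  refine ⟨hy, ?_⟩
  have key : ∀ x : t.domain, ⟪(x : E), s ⟨y, hy⟩ - e⟫_A = 0 := by
    intro x
    rw [CStarModule.inner_sub_right]
    have k1 : Tendsto (fun n => ⟪t x, ((yn n : F))⟫_A) atTop (nhds ⟪t x, y⟫_A) :=
      ((my_cont_inner_right (t x)).tendsto y).comp h1
    have k2 : Tendsto (fun n => ⟪(x : E), s (yn n)⟫_A) atTop (nhds ⟪(x : E), e⟫_A) :=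
      ((my_cont_inner_right (x : E)).tendsto e).comp h2
    have : (fun n => ⟪t x, ((yn n : F))⟫_A) = fun n => ⟪(x : E), s (yn n)⟫_A := by
      funext n; exact ht.adj.inner_eq x (yn n)
    rw [this] at k1
    have hv : ⟪(x : E), e⟫_A = ⟪t x, y⟫_A := tendsto_nhds_unique k2 k1
    rw [← ht.adj.inner_eq x ⟨y, hy⟩, ← hv, sub_self]
  have : s ⟨y, hy⟩ - e = 0 := by
    apply my_dense_sep (A := A) ht.denseDom
    intro z hz
    exact key ⟨z, hz⟩
  exact sub_eq_zero.mp this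

lemma my_pmap_sub (t : E →ₗ.[ℂ] F) {u u' : E} (hu : u ∈ t.domain) (hu' : u' ∈ t.domain) :
    t ⟨u - u', sub_mem hu hu'⟩ = t ⟨u, hu⟩ - t ⟨u', hu'⟩ := by
  have h : (⟨u - u', sub_mem hu hu'⟩ : t.domain) = ⟨u, hu⟩ - ⟨u', hu'⟩ := by
    ext; simp
  rw [h, t.map_sub]

lemma my_pmap_add (t : E →ₗ.[ℂ] F) {u u' : E} (hu : u ∈ t.domain) (hu' : u' ∈ t.domain) :
    t ⟨u + u', add_mem hu hu'⟩ = t ⟨u, hu⟩ + t ⟨u', hu'⟩ := by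
  have h : (⟨u + u', add_mem hu hu'⟩ : t.domain) = ⟨u, hu⟩ + ⟨u', hu'⟩ := by
    ext; simp
  rw [h, t.map_add]

lemma my_pmap_smul (t : E →ₗ.[ℂ] F) (c : ℂ) {u : E} (hu : u ∈ t.domain) :
    t ⟨c • u, Submodule.smul_mem _ c hu⟩ = c • t ⟨u, hu⟩ := by
  have h : (⟨c • u, Submodule.smul_mem _ c hu⟩ : t.domain) = c • ⟨u, hu⟩ := by
    ext; simp
  rw [h, t.map_smul]

/-- The `1 + μ·s∘t` relation: `u` is in the domain and `u + μ • s (t u) = w`. -/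
def OP (t : E →ₗ.[ℂ] F) (s : F →ₗ.[ℂ] E) (μ : ℝ) (u w : E) : Prop :=
  ∃ (hu : u ∈ t.domain) (h2 : t ⟨u, hu⟩ ∈ s.domain), u + (μ:ℂ) • s ⟨t ⟨u, hu⟩, h2⟩ = w

lemma op_sub {t : E →ₗ.[ℂ] F} {s : F →ₗ.[ℂ] E} {μ : ℝ} {u w u' w' : E}
    (h : OP t s μ u w) (h' : OP t s μ u' w') : OP t s μ (u - u') (w - w') := by
  obtain ⟨hu, h2, he⟩ := h; obtain ⟨hu', h2', he'⟩ := h'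
  have hd : u - u' ∈ t.domain := sub_mem hu hu'
  have htd : t ⟨u - u', hd⟩ = t ⟨u, hu⟩ - t ⟨u', hu'⟩ := my_pmap_sub ..
  have h2d : t ⟨u - u', hd⟩ ∈ s.domain := htd ▸ sub_mem h2 h2'
  refine ⟨hd, h2d, ?_⟩
  have hsd : s ⟨t ⟨u - u', hd⟩, h2d⟩ = s ⟨t ⟨u, hu⟩, h2⟩ - s ⟨t ⟨u', hu'⟩, h2'⟩ := by
    have h' : (⟨t ⟨u - u', hd⟩, h2d⟩ : s.domain) = ⟨t ⟨u, hu⟩, h2⟩ - ⟨t ⟨u', hu'⟩, h2'⟩ := by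
      ext; simp [htd]
    rw [h', s.map_sub]
  rw [hsd, smul_sub, ← he, ← he']; abel

lemma op_add {t : E →ₗ.[ℂ] F} {s : F →ₗ.[ℂ] E} {μ : ℝ} {u w u' w' : E}
    (h : OP t s μ u w) (h' : OP t s μ u' w') : OP t s μ (u + u') (w + w') := by
  obtain ⟨hu, h2, he⟩ := h; obtain ⟨hu', h2', he'⟩ := h'
  have hd : u + u' ∈ t.domain := add_mem hu hu'
  have htd : t ⟨u + u', hd⟩ = t ⟨u, hu⟩ + t ⟨u', hu'⟩ := my_pmap_add ..
  have h2d : t ⟨u + u', hd⟩ ∈ s.domain := htd ▸ add_mem h2 h2'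
  refine ⟨hd, h2d, ?_⟩
  have hsd : s ⟨t ⟨u + u', hd⟩, h2d⟩ = s ⟨t ⟨u, hu⟩, h2⟩ + s ⟨t ⟨u', hu'⟩, h2'⟩ := by
    have h' : (⟨t ⟨u + u', hd⟩, h2d⟩ : s.domain) = ⟨t ⟨u, hu⟩, h2⟩ + ⟨t ⟨u', hu'⟩, h2'⟩ := by
      ext; simp [htd]
    rw [h', s.map_add]
  rw [hsd, smul_add, ← he, ← he']; abel

lemma op_smul {t : E →ₗ.[ℂ] F} {s : F →ₗ.[ℂ] E} {μ : ℝ} {u w : E} (c : ℂ)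
    (h : OP t s μ u w) : OP t s μ (c • u) (c • w) := by
  obtain ⟨hu, h2, he⟩ := h
  have hd : c • u ∈ t.domain := Submodule.smul_mem _ c hu
  have htd : t ⟨c • u, hd⟩ = c • t ⟨u, hu⟩ := my_pmap_smul ..
  have h2d : t ⟨c • u, hd⟩ ∈ s.domain := htd ▸ Submodule.smul_mem _ c h2
  refine ⟨hd, h2d, ?_⟩
  have hsd : s ⟨t ⟨c • u, hd⟩, h2d⟩ = c • s ⟨t ⟨u, hu⟩, h2⟩ := by
    have h' : (⟨t ⟨c • u, hd⟩, h2d⟩ : s.domain) = c • ⟨t ⟨u, hu⟩, h2⟩ := by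
      ext; simp [htd]
    rw [h', s.map_smul]
  rw [hsd, ← he, smul_add, smul_comm]

lemma op_bounds {t : E →ₗ.[ℂ] F} {s : F →ₗ.[ℂ] E} (hadj : IsAdjoint A t s)
    {μ : ℝ} (hμ : 0 ≤ μ) {u w : E}
    (hu : u ∈ t.domain) (h2 : t ⟨u, hu⟩ ∈ s.domain)
    (heq : u + (μ:ℂ) • s ⟨t ⟨u, hu⟩, h2⟩ = w) :
    ‖u‖ ≤ ‖w‖ ∧ μ * ‖t ⟨u, hu⟩‖ ^ 2 ≤ ‖w‖ ^ 2 := by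
  set v := t ⟨u, hu⟩ with hv
  have hsv : ⟪s ⟨v, h2⟩, u⟫_A = ⟪v, v⟫_A := by
    have h := hadj.inner_eq ⟨u, hu⟩ ⟨v, h2⟩
    rw [← CStarModule.star_inner (x := u), ← h, CStarModule.star_inner]
  have key : ⟪w, u⟫_A = ⟪u, u⟫_A + (μ:ℂ) • ⟪v, v⟫_A := by
    rw [← heq, CStarModule.inner_add_left, CStarModule.inner_smul_left_complex,
      Complex.star_def, Complex.conj_ofReal, hsv]
  have hpos2 : (0:A) ≤ (μ:ℂ) • ⟪v, v⟫_A := by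
    have h : (μ:ℂ) • ⟪v, v⟫_A = ⟪(Real.sqrt μ : ℂ) • v, (Real.sqrt μ : ℂ) • v⟫_A := by
      rw [CStarModule.inner_smul_right_complex, CStarModule.inner_smul_left_complex, smul_smul,
        Complex.star_def, Complex.conj_ofReal, ← Complex.ofReal_mul, Real.mul_self_sqrt hμ]
    rw [h]; exact CStarModule.inner_self_nonneg
  have hmono1 : ‖⟪u, u⟫_A‖ ≤ ‖⟪w, u⟫_A‖ := by
    rw [key]
    exact CStarAlgebra.norm_le_norm_of_nonneg_of_le CStarModule.inner_self_nonneg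
      (le_add_of_nonneg_right hpos2)
  have hcs : ‖⟪w, u⟫_A‖ ≤ ‖w‖ * ‖u‖ := CStarModule.norm_inner_le E
  have hn1 : ‖u‖ ^ 2 ≤ ‖w‖ * ‖u‖ := by
    rw [CStarModule.norm_sq_eq A]; exact hmono1.trans hcs
  have hle : ‖u‖ ≤ ‖w‖ := by nlinarith [norm_nonneg u, norm_nonneg w]
  refine ⟨hle, ?_⟩
  have hmono2 : ‖(μ:ℂ) • ⟪v, v⟫_A‖ ≤ ‖⟪w, u⟫_A‖ := by
    rw [key]
    exact CStarAlgebra.norm_le_norm_of_nonneg_of_le hpos2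
      (le_add_of_nonneg_left CStarModule.inner_self_nonneg)
  have hval : ‖(μ:ℂ) • ⟪v, v⟫_A‖ = μ * ‖v‖ ^ 2 := by
    rw [norm_smul, Complex.norm_real, Real.norm_eq_abs, abs_of_nonneg hμ,
      CStarModule.norm_sq_eq A]
  nlinarith [norm_nonneg u, norm_nonneg w]

lemma op_unique {t : E →ₗ.[ℂ] F} {s : F →ₗ.[ℂ] E} (hadj : IsAdjoint A t s)
    {μ : ℝ} (hμ : 0 < μ) {u u' w : E} (h : OP t s μ u w) (h' : OP t s μ u' w) : u = u' := by
  have hd := op_sub h h'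
  rw [sub_self] at hd
  obtain ⟨hu, h2, he⟩ := hd
  have hb := (op_bounds hadj hμ.le hu h2 he).1
  rw [norm_zero] at hb
  have : ‖u - u'‖ = 0 := le_antisymm hb (norm_nonneg _)
  rw [norm_eq_zero] at this
  exact sub_eq_zero.mp this

lemma my_sq_le {a b : ℝ} (ha : 0 ≤ a) (hb : 0 ≤ b) (h : a ^ 2 ≤ b ^ 2) : a ≤ b := by
  nlinarith

lemma my_cauchy_dom {G H : Type*} [PseudoMetricSpace G] [PseudoMetricSpace H]
    {u : ℕ → G} {w : ℕ → H} (hw : CauchySeq w) {K : ℝ} (hK : 0 ≤ K)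
    (h : ∀ n m, dist (u n) (u m) ≤ K * dist (w n) (w m)) : CauchySeq u := by
  rw [Metric.cauchySeq_iff] at hw ⊢
  intro ε hε
  obtain ⟨N, hN⟩ := hw (ε / (K + 1)) (by positivity)
  refine ⟨N, fun n hn m hm => lt_of_le_of_lt (h n m) ?_⟩
  have h2 : K * dist (w n) (w m) ≤ K * (ε / (K + 1)) :=
    mul_le_mul_of_nonneg_left (le_of_lt (hN n hn m hm)) hK
  have h3 : K * (ε / (K + 1)) < ε := by
    rw [mul_div_assoc']
    rw [div_lt_iff₀ (by positivity)]
    nlinarith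
  linarith


include A in
lemma my_tendsto_smul_real {α : Type*} {l : Filter α} (μ : ℝ) {f : α → E} {a : E}
    (h : Tendsto f l (nhds a)) : Tendsto (fun n => (μ:ℂ) • f n) l (nhds ((μ:ℂ) • a)) := by
  rw [tendsto_iff_dist_tendsto_zero] at h ⊢
  have heq : (fun n => dist ((μ:ℂ) • f n) ((μ:ℂ) • a)) = fun n => |μ| * dist (f n) a := by
    funext n
    rw [dist_eq_norm, ← smul_sub, my_norm_smul_real (A := A), dist_eq_norm]
  rw [heq]
  simpa using h.const_mul |μ|

lemma surj_closed (t : E →ₗ.[ℂ] F) (s : F →ₗ.[ℂ] E) (ht : IsRegular A t s)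
    {μ : ℝ} (hμ : 0 < μ) : IsClosed {w : E | ∃ u, OP t s μ u w} := by
  apply IsSeqClosed.isClosed
  intro wn w hwn hlim
  choose un hmem hsm heq using hwn
  have hop : ∀ n, OP t s μ (un n) (wn n) := fun n => ⟨hmem n, hsm n, heq n⟩
  have hcw : CauchySeq wn := hlim.cauchySeq
  have hdu : ∀ n m, dist (un n) (un m) ≤ 1 * dist (wn n) (wn m) := by
    intro n m
    obtain ⟨hu, h2, he⟩ := op_sub (hop n) (hop m)
    have := (op_bounds ht.adj hμ.le hu h2 he).1
    rw [dist_eq_norm, dist_eq_norm, one_mul]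
    exact this
  have hcu : CauchySeq un := my_cauchy_dom hcw zero_le_one hdu
  obtain ⟨u, hulim⟩ := cauchySeq_tendsto_of_complete hcu
  set tn : ℕ → F := fun n => t ⟨un n, hmem n⟩ with htn
  have hdt : ∀ n m, dist (tn n) (tn m) ≤ (Real.sqrt μ)⁻¹ * dist (wn n) (wn m) := by
    intro n m
    obtain ⟨hu, h2, he⟩ := op_sub (hop n) (hop m)
    have hb := (op_bounds ht.adj hμ.le hu h2 he).2
    rw [my_pmap_sub t (hmem n) (hmem m)] at hb
    rw [dist_eq_norm, dist_eq_norm]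
    apply my_sq_le (norm_nonneg _) (by positivity)
    rw [mul_pow, ← Real.sqrt_inv, Real.sq_sqrt (by positivity)]
    have h3 : μ⁻¹ * (μ * ‖t ⟨un n, hmem n⟩ - t ⟨un m, hmem m⟩‖ ^ 2)
        ≤ μ⁻¹ * ‖wn n - wn m‖ ^ 2 := mul_le_mul_of_nonneg_left hb (by positivity)
    rw [← mul_assoc, inv_mul_cancel₀ hμ.ne', one_mul] at h3
    exact h3
  have hct : CauchySeq tn := my_cauchy_dom hcw (by positivity) hdt
  obtain ⟨v, hvlim⟩ := cauchySeq_tendsto_of_complete hct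
  have hpn : Tendsto (fun n => ((un n, tn n) : E × F)) atTop (nhds (u, v)) :=
    hulim.prodMk_nhds hvlim
  have hgr : ((u, v) : E × F) ∈ t.graph := by
    refine ht.closedGraph.mem_of_tendsto hpn (Filter.Eventually.of_forall fun n => ?_)
    exact t.mem_graph ⟨un n, hmem n⟩
  rw [LinearPMap.mem_graph_iff] at hgr
  obtain ⟨xx, hxx1, hxx2⟩ := hgr
  have hxx1' : (xx : E) = u := hxx1
  have hxx2' : t xx = v := hxx2
  have hu : u ∈ t.domain := hxx1' ▸ xx.2
  have htu : t ⟨u, hu⟩ = v := by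
    rw [← hxx2']; congr 1; exact Subtype.ext hxx1'.symm
  -- the adjoint part
  have hsv : ∀ n, s ⟨tn n, hsm n⟩ = ((μ⁻¹:ℝ):ℂ) • (wn n - un n) := by
    intro n
    have h := heq n
    have hthis : (μ:ℂ) • s ⟨tn n, hsm n⟩ = wn n - un n := by
      rw [← h]; abel
    calc s ⟨tn n, hsm n⟩ = ((μ⁻¹:ℝ):ℂ) • ((μ:ℂ) • s ⟨tn n, hsm n⟩) := by
          rw [smul_smul, ← Complex.ofReal_mul,
            inv_mul_cancel₀ hμ.ne', Complex.ofReal_one, one_smul]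
      _ = ((μ⁻¹:ℝ):ℂ) • (wn n - un n) := by rw [hthis]
  have hslim : Tendsto (fun n => s (⟨tn n, hsm n⟩ : s.domain)) atTop
      (nhds (((μ⁻¹:ℝ):ℂ) • (w - u))) := by
    have h5 := my_tendsto_smul_real (A := A) (μ⁻¹) (hlim.sub hulim)
    simpa only [hsv] using h5
  obtain ⟨hvd, hsvv⟩ := my_adj_closed t s ht (fun n => ⟨tn n, hsm n⟩) hvlim hslim
  have h2 : t ⟨u, hu⟩ ∈ s.domain := htu ▸ hvd
  refine ⟨u, hu, h2, ?_⟩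
  have hfin : s ⟨t ⟨u, hu⟩, h2⟩ = ((μ⁻¹:ℝ):ℂ) • (w - u) := by
    rw [← hsvv]; congr 1; exact Subtype.ext htu
  rw [hfin, smul_smul, ← Complex.ofReal_mul,
    mul_inv_cancel₀ hμ.ne', Complex.ofReal_one, one_smul]
  abel

lemma surj_base (t : E →ₗ.[ℂ] F) (s : F →ₗ.[ℂ] E) (ht : IsRegular A t s) :
    ∀ w : E, ∃ u, OP t s 1 u w := by
  intro w
  have hsub : onePlusRange t s ⊆ {w : E | ∃ u, OP t s 1 u w} := by
    rintro w' ⟨x, h, hx⟩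
    refine ⟨(x : E), x.2, ?_, ?_⟩
    · exact h
    · rw [Complex.ofReal_one, one_smul]; exact hx
  have hmem : w ∈ closure {w : E | ∃ u, OP t s 1 u w} :=
    closure_mono hsub (ht.denseOnePlusRange w)
  rwa [(surj_closed t s ht one_pos).closure_eq] at hmem

lemma surj_step (t : E →ₗ.[ℂ] F) (s : F →ₗ.[ℂ] E) (ht : IsRegular A t s) {μ μ' : ℝ}
    (hμ : 0 < μ) (hall : ∀ w : E, ∃ u, OP t s μ u w) (hd : |μ' - μ| ≤ μ / 3) :
    ∀ w : E, ∃ u, OP t s μ' u w := by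
  classical
  set q : E → E := fun w => Classical.choose (hall w) with hqdef
  have hq : ∀ w, OP t s μ (q w) w := fun w => Classical.choose_spec (hall w)
  have qadd : ∀ w w', q (w + w') = q w + q w' := fun w w' =>
    op_unique ht.adj hμ (hq (w + w')) (op_add (hq w) (hq w'))
  have qsmul : ∀ (c : ℂ) (w : E), q (c • w) = c • q w := fun c w =>
    op_unique ht.adj hμ (hq (c • w)) (op_smul c (hq w))
  have qnorm : ∀ w, ‖q w‖ ≤ 1 * ‖w‖ := by
    intro w; obtain ⟨hu, h2, he⟩ := hq w
    simpa using (op_bounds ht.adj hμ.le hu h2 he).1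
  let qlin : E →ₗ[ℂ] E := { toFun := q, map_add' := qadd, map_smul' := qsmul }
  let qL : E →L[ℂ] E := qlin.mkContinuous 1 qnorm
  let bL : E →L[ℂ] E := ContinuousLinearMap.id ℂ E - qL
  have hbL : ∀ w, bL w = w - q w := fun w => rfl
  have hbnorm : ∀ w, ‖bL w‖ ≤ 2 * ‖w‖ := by
    intro w; rw [hbL]
    calc ‖w - q w‖ ≤ ‖w‖ + ‖q w‖ := norm_sub_le _ _
      _ ≤ 2 * ‖w‖ := by have := qnorm w; linarith
  set κ : ℝ := (μ' - μ) / μ with hκdef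
  have hκ : |κ| ≤ 1 / 3 := by
    rw [hκdef, abs_div, abs_of_pos hμ, div_le_div_iff₀ hμ (by norm_num : (0:ℝ) < 3)]
    linarith
  let clin : E →ₗ[ℂ] E :=
    { toFun := fun z => (κ:ℂ) • bL z,
      map_add' := fun z z' => by
        show (κ:ℂ) • bL (z + z') = (κ:ℂ) • bL z + (κ:ℂ) • bL z'
        rw [map_add, smul_add],
      map_smul' := fun c z => by
        show (κ:ℂ) • bL (c • z) = c • ((κ:ℂ) • bL z)
        rw [map_smul, smul_comm] }
  have hclin : ∀ z, clin z = (κ:ℂ) • bL z := fun z => rfl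
  have hcnorm : ∀ z, ‖clin z‖ ≤ (|κ| * 2) * ‖z‖ := by
    intro z
    rw [hclin, my_norm_smul_real (A := A), mul_assoc]
    exact mul_le_mul_of_nonneg_left (hbnorm z) (abs_nonneg κ)
  let cL : E →L[ℂ] E := clin.mkContinuous (|κ| * 2) hcnorm
  have hcL : ∀ z, cL z = (κ:ℂ) • bL z := fun z => rfl
  intro w
  set g : ℕ → E := fun n => ((-κ:ℝ):ℂ) ^ n • ((bL ^ n) w) with hgdef
  have hbpow : ∀ n, ‖(bL ^ n) w‖ ≤ 2 ^ n * ‖w‖ := by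
    intro n; induction n with
    | zero => simp
    | succ n ih =>
      rw [pow_succ']
      calc ‖(bL * bL ^ n) w‖ = ‖bL ((bL ^ n) w)‖ := by rw [ContinuousLinearMap.mul_apply]
        _ ≤ 2 * ‖(bL ^ n) w‖ := hbnorm _
        _ ≤ 2 * (2 ^ n * ‖w‖) := by linarith
        _ = 2 ^ (n + 1) * ‖w‖ := by ring
  have hgn : ∀ n, ‖g n‖ ≤ ‖w‖ * (2/3) ^ n := by
    intro n
    have hcast : ((-κ:ℝ):ℂ) ^ n = (((-κ) ^ n : ℝ) : ℂ) := by push_cast; ring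
    have hgeq : g n = (((-κ) ^ n : ℝ) : ℂ) • ((bL ^ n) w) := by
      show ((-κ:ℝ):ℂ) ^ n • ((bL ^ n) w) = _
      rw [hcast]
    calc ‖g n‖ = |(-κ) ^ n| * ‖(bL ^ n) w‖ := by rw [hgeq, my_norm_smul_real (A := A)]
      _ ≤ (1/3) ^ n * (2 ^ n * ‖w‖) := by
          apply mul_le_mul ?_ (hbpow n) (norm_nonneg _) (by positivity)
          rw [abs_pow, abs_neg]
          exact pow_le_pow_left₀ (abs_nonneg κ) hκ n
      _ = ‖w‖ * (2/3) ^ n := by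
          rw [show (2/3:ℝ) ^ n = 2 ^ n * (1/3) ^ n by rw [← mul_pow]; norm_num]
          ring
  have hsum : Summable g := by
    apply Summable.of_norm_bounded ?_ hgn
    exact (summable_geometric_of_lt_one (by norm_num) (by norm_num)).mul_left ‖w‖
  set v : E := ∑' n, g n with hvdef
  have hshift : ∑' n, g (n + 1) = v - g 0 := by
    have h0 := Summable.tsum_eq_zero_add hsum
    rw [hvdef, h0]; abel
  have hbv : (κ:ℂ) • bL v = -(∑' n, g (n + 1)) := by
    have h2 : cL v = ∑' n, cL (g n) := cL.map_tsum hsum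
    have h3 : ∀ n, cL (g n) = -(g (n + 1)) := by
      intro n
      show (κ:ℂ) • bL (((-κ:ℝ):ℂ) ^ n • ((bL ^ n) w))
          = -(((-κ:ℝ):ℂ) ^ (n + 1) • ((bL ^ (n + 1)) w))
      have hb1 : (bL ^ (n + 1)) w = bL ((bL ^ n) w) := by
        rw [pow_succ', ContinuousLinearMap.mul_apply]
      rw [map_smul, smul_smul, hb1, ← neg_smul]
      congr 1
      push_cast
      ring
    rw [← hcL, h2, tsum_congr h3, tsum_neg, hshift]
  have key : v + (κ:ℂ) • bL v = w := by
    rw [hbv, hshift]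
    have hg0 : g 0 = w := by
      show ((-κ:ℝ):ℂ) ^ 0 • ((bL ^ 0) w) = w
      simp
    rw [hg0]; abel
  obtain ⟨hu, h2, he⟩ := hq v
  refine ⟨q v, hu, h2, ?_⟩
  have hs' : (μ:ℂ) • s ⟨t ⟨q v, hu⟩, h2⟩ = v - q v := eq_sub_of_add_eq' he
  have hsval : s ⟨t ⟨q v, hu⟩, h2⟩ = ((μ⁻¹:ℝ):ℂ) • (v - q v) := by
    rw [← hs', smul_smul, ← Complex.ofReal_mul, inv_mul_cancel₀ hμ.ne',
      Complex.ofReal_one, one_smul]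
  rw [hsval, smul_smul, ← Complex.ofReal_mul]
  have hratio : μ' * μ⁻¹ = 1 + κ := by
    rw [hκdef]; field_simp; ring
  rw [hratio]
  have hsplit : ((1 + κ : ℝ):ℂ) • (v - q v) = (v - q v) + (κ:ℂ) • (v - q v) := by
    push_cast; rw [add_smul, one_smul]
  rw [hsplit]
  have hbveq : (κ:ℂ) • (v - q v) = (κ:ℂ) • bL v := by rw [hbL]
  rw [hbveq]
  have hfin : q v + ((v - q v) + (κ:ℂ) • bL v) = v + (κ:ℂ) • bL v := by abel
  rw [hfin, key]

lemma surj_all (t : E →ₗ.[ℂ] F) (s : F →ₗ.[ℂ] E) (ht : IsRegular A t s) {μ : ℝ}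
    (hμ : 0 < μ) : ∀ w : E, ∃ u, OP t s μ u w := by
  have main : ∀ n : ℕ, ∀ ν : ℝ, (3/4:ℝ) ^ n ≤ ν → ν ≤ (4/3:ℝ) ^ n →
      ∀ w : E, ∃ u, OP t s ν u w := by
    intro n
    induction n with
    | zero =>
      intro ν h1 h2
      rw [pow_zero] at h1 h2
      have hone : ν = 1 := le_antisymm h2 h1
      rw [hone]; exact surj_base t s ht
    | succ n ih =>
      intro ν h1 h2
      have hp34 : (0:ℝ) < (3/4:ℝ) ^ n := by positivity
      have hp43 : (0:ℝ) < (4/3:ℝ) ^ n := by positivity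
      have h34le43 : (3/4:ℝ) ^ n ≤ (4/3:ℝ) ^ n :=
        pow_le_pow_left₀ (by norm_num) (by norm_num) n
      set ν' : ℝ := max ((3/4:ℝ) ^ n) (min ν ((4/3:ℝ) ^ n)) with hν'
      have hν'1 : (3/4:ℝ) ^ n ≤ ν' := le_max_left _ _
      have hν'2 : ν' ≤ (4/3:ℝ) ^ n := max_le h34le43 (min_le_right _ _)
      have hν'pos : 0 < ν' := lt_of_lt_of_le hp34 hν'1
      apply surj_step t s ht hν'pos (ih ν' hν'1 hν'2)
      have hps : (3/4:ℝ) ^ (n+1) = (3/4) * (3/4:ℝ) ^ n := by rw [pow_succ]; ring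
      have hps' : (4/3:ℝ) ^ (n+1) = (4/3) * (4/3:ℝ) ^ n := by rw [pow_succ]; ring
      rcases le_total ν ((3/4:ℝ) ^ n) with hc1 | hc1
      · have hmax : ν' = (3/4:ℝ) ^ n := by
          rw [hν', min_eq_left (hc1.trans h34le43), max_eq_left hc1]
        rw [hmax, abs_le]
        constructor <;> nlinarith [h1, hps]
      · rcases le_total ν ((4/3:ℝ) ^ n) with hc2 | hc2
        · have hmax : ν' = ν := by rw [hν', min_eq_left hc2, max_eq_right hc1]
          rw [hmax, sub_self, abs_zero]
          have hν : 0 < ν := lt_of_lt_of_le (by positivity) h1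
          linarith
        · have hmax : ν' = (4/3:ℝ) ^ n := by
            rw [hν', min_eq_right hc2, max_eq_right h34le43]
          rw [hmax, abs_le]
          constructor <;> nlinarith [h2, hps']
  obtain ⟨n, hn⟩ := pow_unbounded_of_one_lt (max μ μ⁻¹) (by norm_num : (1:ℝ) < 4/3)
  apply main n μ ?_ (le_of_lt (lt_of_le_of_lt (le_max_left _ _) hn))
  have h1 : μ⁻¹ ≤ (4/3:ℝ) ^ n := le_of_lt (lt_of_le_of_lt (le_max_right _ _) hn)
  have h2 : (3/4:ℝ) ^ n = ((4/3:ℝ) ^ n)⁻¹ := by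
    rw [← inv_pow]; norm_num
  rw [h2]
  exact (inv_le_comm₀ (by positivity) hμ).mpr h1


include A in
lemma my_norm_smul_complex (c : ℂ) (x : E) : ‖c • x‖ = ‖c‖ * ‖x‖ := by
  have h1 : ‖c • x‖ ^ 2 = ‖⟪c • x, c • x⟫_A‖ := CStarModule.norm_sq_eq A
  have h2 : ‖x‖ ^ 2 = ‖⟪x, x⟫_A‖ := CStarModule.norm_sq_eq A
  have h3 : ⟪c • x, c • x⟫_A = ((Complex.normSq c : ℝ) : ℂ) • ⟪x, x⟫_A := by
    rw [CStarModule.inner_smul_right_complex, CStarModule.inner_smul_left_complex, smul_smul]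
    congr 1
    rw [Complex.star_def, Complex.mul_conj']
    simp [Complex.normSq_eq_norm_sq]
  have h4 : ‖c • x‖ ^ 2 = (‖c‖ * ‖x‖) ^ 2 := by
    rw [h1, h3, norm_smul, Complex.norm_real, Real.norm_eq_abs,
      abs_of_nonneg (Complex.normSq_nonneg c), ← h2, Complex.normSq_eq_norm_sq]
    rw [mul_pow]
  have h5 := congrArg Real.sqrt h4
  rwa [Real.sqrt_sq (norm_nonneg _), Real.sqrt_sq (by positivity)] at h5

include A in
@[reducible]
noncomputable def my_normedSpace : NormedSpace ℂ E :=
  ⟨fun c x => le_of_eq (my_norm_smul_complex (A := A) c x)⟩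

include A in
lemma my_omt (t : E →ₗ.[ℂ] F) (hg : IsClosed (t.graph : Set (E × F)))
    (hr : IsClosed (ranSet t)) :
    ∃ C > 0, ∀ y ∈ ranSet t, ∃ x : t.domain, t x = y ∧ ‖(x:E)‖ ≤ C * ‖y‖ := by
  letI : NormedSpace ℂ E := my_normedSpace (A := A)
  letI : NormedSpace ℂ F := my_normedSpace (A := A)
  haveI hcg : CompleteSpace t.graph := hg.completeSpace_coe
  set R : Submodule ℂ F := t.graph.map (LinearMap.snd ℂ E F) with hR
  have hRset : (R : Set F) = ranSet t := by
    ext y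
    rw [SetLike.mem_coe, hR, Submodule.mem_map]
    constructor
    · rintro ⟨p, hp, rfl⟩
      rw [LinearPMap.mem_graph_iff] at hp
      obtain ⟨x, hx1, hx2⟩ := hp
      exact ⟨x, hx2⟩
    · rintro ⟨x, rfl⟩
      exact ⟨((x:E), t x), t.mem_graph x, rfl⟩
  haveI hcR : CompleteSpace R := by
    have hcl : IsClosed (R : Set F) := by rw [hRset]; exact hr
    exact hcl.completeSpace_coe
  have hmem : ∀ p : t.graph, (LinearMap.snd ℂ E F) ((p : E × F)) ∈ R :=
    fun p => Submodule.mem_map.mpr ⟨(p : E × F), p.2, rfl⟩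
  let φlin : t.graph →ₗ[ℂ] R :=
    ((LinearMap.snd ℂ E F).comp t.graph.subtype).codRestrict R hmem
  have hφval : ∀ p : t.graph, ((φlin p : F)) = (p : E × F).2 := fun p => rfl
  have hφb : ∀ p : t.graph, ‖φlin p‖ ≤ 1 * ‖p‖ := by
    intro p
    rw [one_mul]
    have h1 : ‖φlin p‖ = ‖(p : E × F).2‖ := by rw [← hφval]; rfl
    rw [h1]
    exact norm_snd_le (p : E × F)
  let φ : t.graph →L[ℂ] R := φlin.mkContinuous 1 hφb
  have hsurj : Function.Surjective φ := by
    rintro ⟨y, hy⟩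
    obtain ⟨p, hp, hp2⟩ := Submodule.mem_map.mp hy
    exact ⟨⟨p, hp⟩, Subtype.ext hp2⟩
  obtain ⟨C, hC, hCs⟩ := ContinuousLinearMap.exists_preimage_norm_le (σ' := RingHom.id ℂ) φ hsurj
  refine ⟨C, hC, ?_⟩
  intro y hy
  have hyR : y ∈ R := by rw [← SetLike.mem_coe, hRset]; exact hy
  obtain ⟨p, hp1, hp2⟩ := hCs ⟨y, hyR⟩
  have hpg := p.2
  rw [LinearPMap.mem_graph_iff] at hpg
  obtain ⟨x, hx1, hx2⟩ := hpg
  have hyval : ((p : E × F)).2 = y := by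
    have := congrArg Subtype.val hp1
    exact this
  refine ⟨x, by rw [hx2]; exact hyval, ?_⟩
  have hnormy : ‖(⟨y, hyR⟩ : R)‖ = ‖y‖ := rfl
  calc ‖(x:E)‖ = ‖(p : E × F).1‖ := by rw [hx1]
    _ ≤ ‖(p : E × F)‖ := norm_fst_le _
    _ = ‖p‖ := rfl
    _ ≤ C * ‖y‖ := by rw [← hnormy]; exact hp2

lemma my_P (t : E →ₗ.[ℂ] F) (s : F →ₗ.[ℂ] E) (ht : IsRegular A t s)
    (hr : IsClosed (ranSet t)) :
    ∃ C : ℝ, 1 ≤ C ∧ (∀ y ∈ ranSet t, ∃ x : t.domain, t x = y ∧ ‖(x:E)‖ ≤ C * ‖y‖) ∧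
      ∀ (u : E) (hu : u ∈ t.domain) (h2 : t ⟨u, hu⟩ ∈ s.domain),
        ‖t ⟨u, hu⟩‖ ≤ C * ‖s ⟨t ⟨u, hu⟩, h2⟩‖ := by
  obtain ⟨C0, hC0, hom⟩ := my_omt (A := A) t ht.closedGraph hr
  set C : ℝ := max C0 1 with hCdef
  have hC1 : 1 ≤ C := le_max_right _ _
  have hom' : ∀ y ∈ ranSet t, ∃ x : t.domain, t x = y ∧ ‖(x:E)‖ ≤ C * ‖y‖ := by
    intro y hy
    obtain ⟨x, hx1, hx2⟩ := hom y hy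
    exact ⟨x, hx1, hx2.trans (mul_le_mul_of_nonneg_right (le_max_left _ _) (norm_nonneg y))⟩
  refine ⟨C, hC1, hom', ?_⟩
  intro u hu h2
  have hy : t ⟨u, hu⟩ ∈ ranSet t := ⟨⟨u, hu⟩, rfl⟩
  obtain ⟨x, hx1, hx2⟩ := hom' (t ⟨u, hu⟩) hy
  have hinner : ⟪(x : E), s ⟨t ⟨u, hu⟩, h2⟩⟫_A = ⟪t ⟨u, hu⟩, t ⟨u, hu⟩⟫_A := by
    have h := ht.adj.inner_eq x ⟨t ⟨u, hu⟩, h2⟩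
    rw [hx1] at h
    exact h.symm
  have hn : ‖t ⟨u, hu⟩‖ ^ 2 ≤ (C * ‖t ⟨u, hu⟩‖) * ‖s ⟨t ⟨u, hu⟩, h2⟩‖ := by
    calc ‖t ⟨u, hu⟩‖ ^ 2 = ‖⟪t ⟨u, hu⟩, t ⟨u, hu⟩⟫_A‖ := CStarModule.norm_sq_eq A
      _ = ‖⟪(x : E), s ⟨t ⟨u, hu⟩, h2⟩⟫_A‖ := by rw [hinner]
      _ ≤ ‖(x : E)‖ * ‖s ⟨t ⟨u, hu⟩, h2⟩‖ := CStarModule.norm_inner_le E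
      _ ≤ (C * ‖t ⟨u, hu⟩‖) * ‖s ⟨t ⟨u, hu⟩, h2⟩‖ :=
          mul_le_mul_of_nonneg_right hx2 (norm_nonneg _)
  rcases (norm_nonneg (t ⟨u, hu⟩)).eq_or_lt with hz | hz
  · rw [← hz]
    exact mul_nonneg (by linarith) (norm_nonneg _)
  · have hn' : ‖t ⟨u, hu⟩‖ * ‖t ⟨u, hu⟩‖ ≤ (C * ‖s ⟨t ⟨u, hu⟩, h2⟩‖) * ‖t ⟨u, hu⟩‖ := by
      nlinarith [hn]
    exact le_of_mul_le_mul_right hn' hz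

lemma forward_a (t : E →ₗ.[ℂ] F) (s : F →ₗ.[ℂ] E) (ht : IsRegular A t s)
    (hr : IsClosed (ranSet t)) : OrthoComplemented A (kerSet t) := by
  obtain ⟨C, hC1, _, hP⟩ := my_P t s ht hr
  have hCpos : (0:ℝ) < C := lt_of_lt_of_le one_pos hC1
  set μ : ℝ := 4 * C ^ 2 with hμdef
  have hμ : 0 < μ := by positivity
  have hall := surj_all t s ht hμ
  set q : E → E := fun w => Classical.choose (hall w) with hqdef
  have hq : ∀ w, OP t s μ (q w) w := fun w => Classical.choose_spec (hall w)
  have qnorm : ∀ w w', ‖q w - q w'‖ ≤ ‖w - w'‖ := by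
    intro w w'
    obtain ⟨hu, h2, he⟩ := op_sub (hq w) (hq w')
    exact (op_bounds ht.adj hμ.le hu h2 he).1
  intro z
  set x : ℕ → E := fun n => q^[n] z with hxdef
  have hx0 : x 0 = z := rfl
  have hxs : ∀ n, x (n + 1) = q (x n) := fun n => Function.iterate_succ_apply' q n z
  have hxop : ∀ n, OP t s μ (x (n + 1)) (x n) := fun n => by
    rw [hxs n]; exact hq (x n)
  choose hdom hsdom heqq using hxop
  set sv : ℕ → E := fun n => s ⟨t ⟨x (n + 1), hdom n⟩, hsdom n⟩ with hsvdef
  have hsvser : ∀ n, x n - x (n + 1) = (μ:ℂ) • sv n := by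
    intro n
    have := eq_sub_of_add_eq' (heqq n)
    rw [← this]
  set γ : ℕ → ℝ := fun n => ‖x n - x (n + 1)‖ with hγdef
  set a : ℕ → ℝ := fun n => ‖t ⟨x (n + 1), hdom n⟩‖ with hadef
  have hγnn : ∀ n, 0 ≤ γ n := fun n => norm_nonneg _
  have hann : ∀ n, 0 ≤ a n := fun n => norm_nonneg _
  have hsvnorm : ∀ n, μ * ‖sv n‖ = γ n := by
    intro n
    rw [hγdef]
    simp only []
    rw [hsvser n, my_norm_smul_real (A := A), abs_of_pos hμ]
  have hi : ∀ n, μ * a n ≤ C * γ n := by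
    intro n
    have h1 := hP (x (n + 1)) (hdom n) (hsdom n)
    have h2 : μ * a n ≤ μ * (C * ‖sv n‖) :=
      mul_le_mul_of_nonneg_left h1 hμ.le
    calc μ * a n ≤ μ * (C * ‖sv n‖) := h2
      _ = C * (μ * ‖sv n‖) := by ring
      _ = C * γ n := by rw [hsvnorm n]
  have hii : ∀ n, γ (n + 1) ≤ (1/3) * γ n := by
    intro n
    have hd' : x (n + 1) - x (n + 2) ∈ t.domain := sub_mem (hdom n) (hdom (n + 1))
    have htd : t ⟨x (n + 1) - x (n + 2), hd'⟩
        = t ⟨x (n + 1), hdom n⟩ - t ⟨x (n + 2), hdom (n + 1)⟩ := my_pmap_sub ..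
    have hinner1 : ⟪x (n + 1) - x (n + 2), sv (n + 1)⟫_A
        = ⟪t ⟨x (n + 1), hdom n⟩ - t ⟨x (n + 2), hdom (n + 1)⟩,
            t ⟨x (n + 2), hdom (n + 1)⟩⟫_A := by
      rw [← htd, hsvdef]
      exact (ht.adj.inner_eq ⟨x (n + 1) - x (n + 2), hd'⟩
        ⟨t ⟨x (n + 2), hdom (n + 1)⟩, hsdom (n + 1)⟩).symm
    have hsq : γ (n + 1) ^ 2 ≤ μ * ((a n + a (n + 1)) * a (n + 1)) := by
      have e1 : γ (n + 1) ^ 2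
          = ‖⟪x (n + 1) - x (n + 2), x (n + 1) - x (n + 2)⟫_A‖ := CStarModule.norm_sq_eq A
      have e2 : ⟪x (n + 1) - x (n + 2), x (n + 1) - x (n + 2)⟫_A
          = (μ:ℂ) • ⟪x (n + 1) - x (n + 2), sv (n + 1)⟫_A := by
        nth_rewrite 2 [hsvser (n + 1)]
        rw [CStarModule.inner_smul_right_complex]
      rw [e1, e2, hinner1]
      rw [norm_smul, Complex.norm_real, Real.norm_eq_abs, abs_of_pos hμ]
      apply mul_le_mul_of_nonneg_left ?_ hμ.le
      calc ‖⟪t ⟨x (n + 1), hdom n⟩ - t ⟨x (n + 2), hdom (n + 1)⟩,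
              t ⟨x (n + 2), hdom (n + 1)⟩⟫_A‖
          ≤ ‖t ⟨x (n + 1), hdom n⟩ - t ⟨x (n + 2), hdom (n + 1)⟩‖
            * ‖t ⟨x (n + 2), hdom (n + 1)⟩‖ := CStarModule.norm_inner_le F
        _ ≤ (a n + a (n + 1)) * a (n + 1) := by
            apply mul_le_mul_of_nonneg_right (norm_sub_le _ _) (norm_nonneg _)
    -- now numeric
    have hin : μ * a n ≤ C * γ n := hi n
    have hin1 : μ * a (n + 1) ≤ C * γ (n + 1) := hi (n + 1)
    have h1 : μ * (a n + a (n + 1)) ≤ C * (γ n + γ (n + 1)) := by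
      rw [mul_add, mul_add]; exact add_le_add hin hin1
    have h4 : (μ * (a n + a (n + 1))) * (μ * a (n + 1))
        ≤ (C * (γ n + γ (n + 1))) * (C * γ (n + 1)) :=
      mul_le_mul h1 hin1 (mul_nonneg hμ.le (hann (n + 1)))
        (mul_nonneg hCpos.le (add_nonneg (hγnn n) (hγnn (n + 1))))
    have h5 : μ * γ (n + 1) ^ 2 ≤ μ * (μ * ((a n + a (n + 1)) * a (n + 1))) :=
      mul_le_mul_of_nonneg_left hsq hμ.le
    have h7 : 3 * (C ^ 2 * γ (n + 1) ^ 2) ≤ C ^ 2 * (γ n * γ (n + 1)) := by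
      nlinarith [h4, h5, hμdef]
    have h6 : 3 * γ (n + 1) ^ 2 ≤ γ n * γ (n + 1) := by
      have hc2 : (0:ℝ) < C ^ 2 := by positivity
      nlinarith [h7, hc2]
    rcases (hγnn (n + 1)).eq_or_lt with hg | hg
    · rw [← hg]
      exact mul_nonneg (by norm_num) (hγnn n)
    · have h8 : 3 * γ (n + 1) * γ (n + 1) ≤ γ n * γ (n + 1) := by nlinarith [h6]
      have h9 := le_of_mul_le_mul_right h8 hg
      linarith
  have hgeo : ∀ n, γ n ≤ γ 0 * (1/3) ^ n := by
    intro n; induction n with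
    | zero => simp
    | succ n ih =>
      calc γ (n + 1) ≤ (1/3) * γ n := hii n
        _ ≤ (1/3) * (γ 0 * (1/3) ^ n) := by linarith
        _ = γ 0 * (1/3) ^ (n + 1) := by ring
  have hcauchy : CauchySeq x := by
    apply cauchySeq_of_le_geometric (1/3 : ℝ) (γ 0) (by norm_num)
    intro n
    rw [dist_eq_norm]
    exact hgeo n
  obtain ⟨u, hulim⟩ := cauchySeq_tendsto_of_complete hcauchy
  have hulim1 : Tendsto (fun n => x (n + 1)) atTop (nhds u) :=
    hulim.comp (tendsto_add_atTop_nat 1)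
  have hqu : q u = u := by
    have hb : ∀ n, ‖q u - u‖ ≤ ‖u - x n‖ + ‖x (n + 1) - u‖ := by
      intro n
      calc ‖q u - u‖ = ‖(q u - q (x n)) + (x (n + 1) - u)‖ := by
            rw [← hxs n]; congr 1; abel
        _ ≤ ‖q u - q (x n)‖ + ‖x (n + 1) - u‖ := norm_add_le _ _
        _ ≤ ‖u - x n‖ + ‖x (n + 1) - u‖ := by
            have := qnorm u (x n); linarith
    have h0 : Tendsto (fun n => ‖u - x n‖ + ‖x (n + 1) - u‖) atTop (nhds 0) := by
      have t1 : Tendsto (fun n => ‖u - x n‖) atTop (nhds 0) := by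
        have : Tendsto (fun n => u - x n) atTop (nhds (u - u)) :=
          tendsto_const_nhds.sub hulim
        rw [sub_self] at this
        simpa using this.norm
      have t2 : Tendsto (fun n => ‖x (n + 1) - u‖) atTop (nhds 0) := by
        have : Tendsto (fun n => x (n + 1) - u) atTop (nhds (u - u)) :=
          hulim1.sub tendsto_const_nhds
        rw [sub_self] at this
        simpa using this.norm
      simpa using t1.add t2
    have : ‖q u - u‖ ≤ 0 := ge_of_tendsto h0 (Filter.Eventually.of_forall hb)
    have : ‖q u - u‖ = 0 := le_antisymm this (norm_nonneg _)
    rw [norm_eq_zero] at this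
    exact sub_eq_zero.mp this
  -- u is in the kernel
  obtain ⟨hu, h2, he⟩ := hq u
  have hsz : (μ:ℂ) • s ⟨t ⟨q u, hu⟩, h2⟩ = 0 := by
    have := eq_sub_of_add_eq' he
    rw [this, hqu, sub_self]
  have hs0 : s ⟨t ⟨q u, hu⟩, h2⟩ = 0 := by
    rcases smul_eq_zero.mp hsz with h | h
    · exact absurd h (by simp [hμ.ne'])
    · exact h
  have hinner0 : ⟪t ⟨q u, hu⟩, t ⟨q u, hu⟩⟫_A = 0 := by
    rw [ht.adj.inner_eq ⟨q u, hu⟩ ⟨t ⟨q u, hu⟩, h2⟩, hs0, CStarModule.inner_zero_right]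
  have ht0 : t ⟨q u, hu⟩ = 0 := CStarModule.inner_self.mp hinner0
  have hud : u ∈ t.domain := hqu ▸ hu
  have hker : u ∈ kerSet t := by
    refine ⟨hud, ?_⟩
    rw [← ht0]; congr 1; exact Subtype.ext hqu.symm
  -- z - u is orthogonal to the kernel
  have hortho : z - u ∈ ortho A (kerSet t) := by
    intro k hk
    obtain ⟨hkd, hk0⟩ := hk
    have hterm : ∀ n, ⟪k, x n - x (n + 1)⟫_A = 0 := by
      intro n
      rw [hsvser n, CStarModule.inner_smul_right_complex]
      have : ⟪k, sv n⟫_A = 0 := by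
        rw [hsvdef]
        simp only []
        rw [← ht.adj.inner_eq ⟨k, hkd⟩ ⟨t ⟨x (n + 1), hdom n⟩, hsdom n⟩, hk0,
          CStarModule.inner_zero_left]
      rw [this, smul_zero]
    have htel : ∀ n, ⟪k, z - x n⟫_A = 0 := by
      intro n; induction n with
      | zero => rw [hx0, sub_self, CStarModule.inner_zero_right]
      | succ n ih =>
        have : z - x (n + 1) = (z - x n) + (x n - x (n + 1)) := by abel
        rw [this, CStarModule.inner_add_right, ih, hterm n, add_zero]
    have hlim : Tendsto (fun n => ⟪k, z - x n⟫_A) atTop (nhds ⟪k, z - u⟫_A) := by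
      have h1 : Tendsto (fun n => z - x n) atTop (nhds (z - u)) :=
        tendsto_const_nhds.sub hulim
      exact ((my_cont_inner_right k).tendsto (z - u)).comp h1
    have hconst : Tendsto (fun _ : ℕ => (0 : A)) atTop (nhds 0) := tendsto_const_nhds
    have : ⟪k, z - u⟫_A = 0 := by
      apply tendsto_nhds_unique ?_ hconst
      simpa only [htel] using hlim
    exact this
  exact ⟨u, hker, z - u, hortho, by abel⟩

lemma forward_b (t : E →ₗ.[ℂ] F) (s : F →ₗ.[ℂ] E) (ht : IsRegular A t s)
    (hr : IsClosed (ranSet t)) :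
    ∃ c : ℝ, 0 < c ∧ ∀ x : t.domain, (x : E) ∈ ortho A (kerSet t) →
      c * ‖(x : E)‖ ≤ ‖t x‖ := by
  obtain ⟨C, hC1, hom, _⟩ := my_P t s ht hr
  have hCpos : (0:ℝ) < C := lt_of_lt_of_le one_pos hC1
  refine ⟨C⁻¹, by positivity, ?_⟩
  intro x hx
  have hy : t x ∈ ranSet t := ⟨x, rfl⟩
  obtain ⟨x', hx'1, hx'2⟩ := hom (t x) hy
  have hkmem : (x' : E) - (x : E) ∈ t.domain := sub_mem x'.2 x.2
  have hk0 : t ⟨(x' : E) - (x : E), hkmem⟩ = 0 := by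
    rw [my_pmap_sub t x'.2 x.2]
    have e1 : t ⟨(x' : E), x'.2⟩ = t x' := rfl
    have e2 : t ⟨(x : E), x.2⟩ = t x := rfl
    rw [e1, e2, hx'1, sub_self]
  have hker : (x' : E) - (x : E) ∈ kerSet t := ⟨hkmem, hk0⟩
  have horto : ⟪(x' : E) - (x : E), (x : E)⟫_A = 0 := hx _ hker
  have horto2 : ⟪(x : E), (x' : E) - (x : E)⟫_A = 0 := by
    rw [← CStarModule.star_inner, horto, star_zero]
  have hexp : ⟪(x' : E), (x' : E)⟫_A
      = ⟪(x : E), (x : E)⟫_A + ⟪(x' : E) - (x : E), (x' : E) - (x : E)⟫_A := by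
    have hre : (x' : E) = (x : E) + ((x' : E) - (x : E)) := by abel
    conv_lhs => rw [hre]
    rw [CStarModule.inner_add_left, CStarModule.inner_add_right,
      CStarModule.inner_add_right, horto, horto2, add_zero, zero_add]
  have hmono : ‖(x : E)‖ ^ 2 ≤ ‖(x' : E)‖ ^ 2 := by
    rw [CStarModule.norm_sq_eq A, CStarModule.norm_sq_eq A]
    apply CStarAlgebra.norm_le_norm_of_nonneg_of_le CStarModule.inner_self_nonneg
    rw [hexp]
    exact le_add_of_nonneg_right CStarModule.inner_self_nonneg
  have hle : ‖(x : E)‖ ≤ C * ‖t x‖ := by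
    apply my_sq_le (norm_nonneg _) (by positivity)
    calc ‖(x : E)‖ ^ 2 ≤ ‖(x' : E)‖ ^ 2 := hmono
      _ ≤ (C * ‖t x‖) ^ 2 := by
          apply pow_le_pow_left₀ (norm_nonneg _) hx'2
  calc C⁻¹ * ‖(x : E)‖ ≤ C⁻¹ * (C * ‖t x‖) :=
        mul_le_mul_of_nonneg_left hle (by positivity)
    _ = ‖t x‖ := by field_simp

lemma my_backward (t : E →ₗ.[ℂ] F) (s : F →ₗ.[ℂ] E) (ht : IsRegular A t s)
    (hoc : OrthoComplemented A (kerSet t))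
    (hb : ∃ c : ℝ, 0 < c ∧ ∀ x : t.domain, (x : E) ∈ ortho A (kerSet t) →
      c * ‖(x : E)‖ ≤ ‖t x‖) :
    IsClosed (ranSet t) := by
  obtain ⟨c, hc, hbdd⟩ := hb
  apply IsSeqClosed.isClosed
  intro yn y hyn hlim
  choose xn hxn using hyn
  have hdec := fun n => hoc (xn n : E)
  choose un hun vn hvn hsum using hdec
  have hker := fun n => hun n
  choose hund hunz using hker
  have hveq : ∀ n, vn n = (xn n : E) - un n := by
    intro n; rw [hsum n]; abel
  have hvd : ∀ n, vn n ∈ t.domain := by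
    intro n; rw [hveq n]; exact sub_mem (xn n).2 (hund n)
  have htv : ∀ n, t ⟨vn n, hvd n⟩ = yn n := by
    intro n
    have h1 : (⟨vn n, hvd n⟩ : t.domain)
        = ⟨(xn n : E) - un n, sub_mem (xn n).2 (hund n)⟩ := Subtype.ext (hveq n)
    rw [h1, my_pmap_sub t (xn n).2 (hund n)]
    have e2 : t ⟨(xn n : E), (xn n).2⟩ = t (xn n) := rfl
    rw [e2, hxn n, hunz n, sub_zero]
  have hvsub : ∀ n m, (vn n - vn m : E) ∈ ortho A (kerSet t) := by
    intro n m k hk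
    rw [CStarModule.inner_sub_right, hvn n k hk, hvn m k hk, sub_self]
  have hdist : ∀ n m, dist (vn n) (vn m) ≤ c⁻¹ * dist (yn n) (yn m) := by
    intro n m
    have hmem : vn n - vn m ∈ t.domain := sub_mem (hvd n) (hvd m)
    have hb1 := hbdd ⟨vn n - vn m, hmem⟩ (hvsub n m)
    have hb2 : t (⟨vn n - vn m, hmem⟩ : t.domain) = yn n - yn m := by
      rw [my_pmap_sub t (hvd n) (hvd m), htv n, htv m]
    rw [hb2] at hb1
    rw [dist_eq_norm, dist_eq_norm]
    have : ‖vn n - vn m‖ ≤ c⁻¹ * ‖yn n - yn m‖ := by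
      calc ‖vn n - vn m‖ = c⁻¹ * (c * ‖vn n - vn m‖) := by
            rw [← mul_assoc, inv_mul_cancel₀ hc.ne', one_mul]
        _ ≤ c⁻¹ * ‖yn n - yn m‖ := mul_le_mul_of_nonneg_left hb1 (by positivity)
    exact this
  have hcv : CauchySeq vn := my_cauchy_dom hlim.cauchySeq (by positivity) hdist
  obtain ⟨v, hvlim⟩ := cauchySeq_tendsto_of_complete hcv
  have hpn : Tendsto (fun n => ((vn n, yn n) : E × F)) atTop (nhds (v, y)) :=
    hvlim.prodMk_nhds hlim
  have hgr : ((v, y) : E × F) ∈ t.graph := by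
    refine ht.closedGraph.mem_of_tendsto hpn (Filter.Eventually.of_forall fun n => ?_)
    have := t.mem_graph ⟨vn n, hvd n⟩
    rwa [htv n] at this
  rw [LinearPMap.mem_graph_iff] at hgr
  obtain ⟨xx, hxx1, hxx2⟩ := hgr
  exact ⟨xx, hxx2⟩
/-- a regular operator `t` has closed range iff `Ker(t)` is orthogonally
complemented in `E` and `t` is bounded below on `Ker(t)^⊥ ∩ Dom(t)`. -/
theorem ranSet_isClosed_iff_orthoComplemented_and_boundedBelow
    (t : E →ₗ.[ℂ] F) (s : F →ₗ.[ℂ] E) (ht : IsRegular A t s) :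
    IsClosed (ranSet t) ↔
      (OrthoComplemented A (kerSet t) ∧
        ∃ c : ℝ, 0 < c ∧ ∀ x : t.domain, (x : E) ∈ ortho A (kerSet t) →
          c * ‖(x : E)‖ ≤ ‖t x‖) := by
  constructor
  · intro hr
    exact ⟨forward_a t s ht hr, forward_b t s ht hr⟩
  · rintro ⟨hoc, hb⟩
    exact my_backward t s ht hoc hb
end AuxDev
end

section
/- A densely defined A-linear operator t: Dom(t) ⊆ E → F between Hilbert A-modules is regular if and only if its graph G(t) is orthogonally complemented in E ⊕ F and the closure of Ran(P_F P_{G(t)^⊥}) equals its biorthogonal complement Ran(P_F P_{G(t)^⊥})^⊥⊥. -/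
/- Framework: Hilbert C*-modules over a C*-algebra `A` (via Mathlib's `CStarModule`),
densely defined operators as `LinearPMap`s, `A`-valued orthogonality, adjoints,
regularity, graphs inside `E ⊕ F`. -/

open scoped InnerProductSpace RightActions WithCStarModule

open RegularOperators
variable {A : Type*} [NonUnitalCStarAlgebra A] [PartialOrder A] [StarOrderedRing A]
variable {E F : Type*}
  [NormedAddCommGroup E] [Module ℂ E] [SMul A E] [CStarModule A E] [CompleteSpace E]
  [NormedAddCommGroup F] [Module ℂ F] [SMul A F] [CStarModule A F] [CompleteSpace F]

/-! ### Auxiliary lemmas -/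

section GenHelpers
variable {H : Type*} [NormedAddCommGroup H] [Module ℂ H] [SMul A H] [CStarModule A H]

lemma RegularOperators.cont_inner_left (a : H) : Continuous fun x : H => ⟪x, a⟫_A := by
  refine (LipschitzWith.of_dist_le_mul (K := ‖a‖₊) fun x y => ?_).continuous
  rw [dist_eq_norm, dist_eq_norm, ← CStarModule.inner_sub_left]
  calc ‖⟪x - y, a⟫_A‖ ≤ ‖x - y‖ * ‖a‖ := CStarModule.norm_inner_le H
    _ = ‖a‖ * ‖x - y‖ := mul_comm _ _

lemma RegularOperators.cont_inner_right (a : H) : Continuous fun x : H => ⟪a, x⟫_A := by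
  refine (LipschitzWith.of_dist_le_mul (K := ‖a‖₊) fun x y => ?_).continuous
  rw [dist_eq_norm, dist_eq_norm, ← CStarModule.inner_sub_right]
  calc ‖⟪a, x - y⟫_A‖ ≤ ‖a‖ * ‖x - y‖ := CStarModule.norm_inner_le H

lemma RegularOperators.zero_of_inner_dense {D : Set H} (hD : Dense D) {a : H}
    (h : ∀ x ∈ D, ⟪x, a⟫_A = 0) : a = 0 := by
  have : ∀ x : H, ⟪x, a⟫_A = 0 :=
    fun x => congrFun (Continuous.ext_on hD (RegularOperators.cont_inner_left a)
      continuous_const h) x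
  exact CStarModule.inner_self.mp (this a)

lemma RegularOperators.eq_of_inner_dense {D : Set H} (hD : Dense D) {a b : H}
    (h : ∀ x ∈ D, ⟪x, a⟫_A = ⟪x, b⟫_A) : a = b := by
  have := RegularOperators.zero_of_inner_dense (A := A) hD (a := a - b) (fun x hx => by
    rw [CStarModule.inner_sub_right, h x hx, sub_self])
  exact sub_eq_zero.mp this

/-- If `S` is a dense subset then its closure is everything and its biorthogonal
complement is everything. -/
lemma RegularOperators.bi_eq_of_dense {S : Set H} (hS : Dense S) :
    closure S = ortho A (ortho A S) := by
  have h1 : ortho A S = {(0 : H)} := by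
    ext y
    constructor
    · intro hy
      exact RegularOperators.zero_of_inner_dense (A := A) hS hy
    · rintro rfl
      intro u _
      simp [ortho]
  rw [hS.closure_eq, h1]
  ext y
  simp [ortho]

/-- First Pythagoras-type estimate: if `⟪g, w⟫ = 0` then `‖g‖ ≤ ‖g + w‖`. -/
lemma RegularOperators.norm_le_add_of_orth {g w : H} (h : ⟪g, w⟫_A = 0) :
    ‖g‖ ≤ ‖g + w‖ := by
  have hwg : ⟪w, g⟫_A = 0 := by rw [← CStarModule.star_inner, h, star_zero]
  have hexp : ⟪g + w, g + w⟫_A = ⟪g, g⟫_A + ⟪w, w⟫_A := by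
    rw [CStarModule.inner_add_left]
    simp [h, hwg, add_assoc]
  have h1 : ‖g‖ ^ 2 ≤ ‖g + w‖ ^ 2 := by
    rw [CStarModule.norm_sq_eq (A := A), CStarModule.norm_sq_eq (A := A), hexp]
    exact CStarAlgebra.norm_le_norm_of_nonneg_of_le CStarModule.inner_self_nonneg
      (le_add_of_nonneg_right CStarModule.inner_self_nonneg)
  exact (pow_le_pow_iff_left₀ (norm_nonneg g) (norm_nonneg _) (by norm_num)).mp h1

lemma RegularOperators.cauchy_dominate {G' : Type*} [NormedAddCommGroup G']
    {u : ℕ → H} {v : ℕ → G'} (hu : CauchySeq u)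
    (h : ∀ m n, ‖v m - v n‖ ≤ ‖u m - u n‖) : CauchySeq v := by
  rw [Metric.cauchySeq_iff] at hu ⊢
  intro ε hε
  obtain ⟨N, hN⟩ := hu ε hε
  refine ⟨N, fun m hm n hn => ?_⟩
  calc dist (v m) (v n) = ‖v m - v n‖ := dist_eq_norm _ _
    _ ≤ ‖u m - u n‖ := h m n
    _ = dist (u m) (u n) := (dist_eq_norm _ _).symm
    _ < ε := hN m hm n hn

end GenHelpers

section ProdHelpers

include A in
lemma RegularOperators.cont_equivP :
    Continuous fun w : C⋆ᵐᵒᵈ(A, E × F) => WithCStarModule.equiv A (E × F) w := by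
  have h : LipschitzWith 1 (fun w : C⋆ᵐᵒᵈ(A, E × F) => WithCStarModule.equiv A (E × F) w) := by
    refine LipschitzWith.of_dist_le_mul fun x y => ?_
    rw [dist_eq_norm, dist_eq_norm, ← WithCStarModule.equiv_sub]
    simpa using WithCStarModule.norm_equiv_le_norm_prod (x - y)
  exact h.continuous

include A in
lemma RegularOperators.cont_equivP_symm :
    Continuous fun p : E × F => (WithCStarModule.equiv A (E × F)).symm p := by
  have h : LipschitzWith 2 (fun p : E × F => (WithCStarModule.equiv A (E × F)).symm p) := by
    refine LipschitzWith.of_dist_le_mul fun p q => ?_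
    rw [dist_eq_norm, dist_eq_norm, ← WithCStarModule.equiv_symm_sub]
    refine (WithCStarModule.prod_norm_le_norm_add _).trans ?_
    have h2 : ‖((WithCStarModule.equiv A (E × F)).symm (p - q)).1‖ ≤ ‖p - q‖ := by
      rw [WithCStarModule.equiv_symm_fst]; exact norm_fst_le _
    have h3 : ‖((WithCStarModule.equiv A (E × F)).symm (p - q)).2‖ ≤ ‖p - q‖ := by
      rw [WithCStarModule.equiv_symm_snd]; exact norm_snd_le _
    push_cast
    linarith
  exact h.continuous

/-- Membership in the orthogonal complement of the graph. -/
lemma RegularOperators.mem_ortho_graphSet {t : E →ₗ.[ℂ] F} {w : C⋆ᵐᵒᵈ(A, E × F)} :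
    w ∈ ortho A (graphSet A t) ↔
      ∀ x : t.domain, ⟪(x : E), (WithCStarModule.equiv A (E × F) w).1⟫_A
        + ⟪t x, (WithCStarModule.equiv A (E × F) w).2⟫_A = 0 := by
  constructor
  · intro h x
    have hg : (WithCStarModule.equiv A (E × F)).symm ((x : E), t x) ∈ graphSet A t :=
      ⟨x, by simp⟩
    have := h _ hg
    rwa [WithCStarModule.prod_inner] at this
  · intro h g hg
    obtain ⟨x, hx⟩ := hg
    rw [WithCStarModule.prod_inner]
    have h1 : (g.1 : E) = (x : E) := by
      have := congrArg Prod.fst hx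
      simpa using this
    have h2 : (g.2 : F) = t x := by
      have := congrArg Prod.snd hx
      simpa using this
    rw [h1, h2]
    exact h x

lemma RegularOperators.pfRange_eq_adjDomain (t : E →ₗ.[ℂ] F) :
    pfRange A t = adjDomain A t := by
  ext y
  constructor
  · rintro ⟨w, hw, rfl⟩
    refine ⟨-(WithCStarModule.equiv A (E × F) w).1, fun x => ?_⟩
    have := (RegularOperators.mem_ortho_graphSet (A := A)).mp hw x
    rw [CStarModule.inner_neg_right]
    exact eq_neg_of_add_eq_zero_right this
  · rintro ⟨z, hz⟩
    refine ⟨(WithCStarModule.equiv A (E × F)).symm (-z, y), ?_, by simp⟩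
    rw [RegularOperators.mem_ortho_graphSet]
    intro x
    simp only [Equiv.apply_symm_apply]
    rw [hz x, CStarModule.inner_neg_right]
    exact neg_add_cancel _

end ProdHelpers
section Forward

lemma RegularOperators.forward (t : E →ₗ.[ℂ] F) (hmod : AModuleMap A t)
    (hdense : Dense (t.domain : Set E))
    (hoc : OrthoComplemented A (graphSet A t))
    (hbi : closure (pfRange A t) = ortho A (ortho A (pfRange A t))) :
    ∃ s : F →ₗ.[ℂ] E, IsRegular A t s := by
  classical
  have uniq : ∀ {z z' : E}, (∀ x : t.domain, ⟪(x : E), z⟫_A = ⟪(x : E), z'⟫_A) → z = z' := by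
    intro z z' h
    exact RegularOperators.eq_of_inner_dense (A := A) hdense fun x hx => h ⟨x, hx⟩
  let S : Submodule ℂ F :=
    { carrier := adjDomain A t
      zero_mem' := ⟨0, fun x => by simp⟩
      add_mem' := by
        rintro y₁ y₂ ⟨z₁, h₁⟩ ⟨z₂, h₂⟩
        exact ⟨z₁ + z₂, fun x => by
          rw [CStarModule.inner_add_right, CStarModule.inner_add_right, h₁ x, h₂ x]⟩
      smul_mem' := by
        rintro c y ⟨z, h⟩
        exact ⟨c • z, fun x => by
          rw [CStarModule.inner_smul_right_complex, CStarModule.inner_smul_right_complex, h x]⟩ }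
  have hmemS : ∀ y : S, (y : F) ∈ adjDomain A t := fun y => y.2
  let f0 : S → E := fun y => Classical.choose (hmemS y)
  have hf0 : ∀ (y : S) (x : t.domain), ⟪t x, (y : F)⟫_A = ⟪(x : E), f0 y⟫_A :=
    fun y => Classical.choose_spec (hmemS y)
  have hadd : ∀ y₁ y₂ : S, f0 (y₁ + y₂) = f0 y₁ + f0 y₂ := by
    intro y₁ y₂
    refine uniq fun x => ?_
    rw [← hf0 _ x, CStarModule.inner_add_right, ← hf0 y₁ x, ← hf0 y₂ x,
      Submodule.coe_add, CStarModule.inner_add_right]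
  have hsmul : ∀ (c : ℂ) (y : S), f0 (c • y) = c • f0 y := by
    intro c y
    refine uniq fun x => ?_
    rw [← hf0 _ x, CStarModule.inner_smul_right_complex, ← hf0 y x,
      Submodule.coe_smul, CStarModule.inner_smul_right_complex]
  let s : F →ₗ.[ℂ] E :=
    { domain := S
      toFun := { toFun := f0, map_add' := hadd, map_smul' := hsmul } }
  have hsapp : ∀ y : s.domain, s y = f0 y := fun _ => rfl
  -- graph is closed
  have hgs : IsClosed (graphSet A t) := by
    refine isClosed_of_closure_subset fun z hz => ?_
    obtain ⟨u, hu, v, hv, hzuv⟩ := hoc z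
    have hzv : ⟪z, v⟫_A = 0 := by
      have heq : Set.EqOn (fun w : C⋆ᵐᵒᵈ(A, E × F) => ⟪w, v⟫_A) (fun _ => 0) (closure (graphSet A t)) :=
        Set.EqOn.closure (fun w hw => hv w hw) (RegularOperators.cont_inner_left v)
          continuous_const
      exact heq hz
    have hvv : ⟪v, v⟫_A = 0 := by
      have huv : ⟪u, v⟫_A = 0 := hv u hu
      have h2 : ⟪z, v⟫_A = ⟪u, v⟫_A + ⟪v, v⟫_A := by
        rw [hzuv, CStarModule.inner_add_left]
      rw [hzv, huv, zero_add] at h2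
      exact h2.symm
    have hv0 : v = 0 := CStarModule.inner_self.mp hvv
    rw [hzuv, hv0, add_zero]
    exact hu
  have hclosedGraph : IsClosed (t.graph : Set (E × F)) := by
    have hgraph_eq : (t.graph : Set (E × F)) =
        (fun p : E × F => (WithCStarModule.equiv A (E × F)).symm p) ⁻¹' graphSet A t := by
      ext p
      simp only [Set.mem_preimage, graphSet, Set.mem_setOf_eq, Equiv.apply_symm_apply]
      rw [SetLike.mem_coe, LinearPMap.mem_graph_iff]
      constructor
      · rintro ⟨x, h1, h2⟩
        exact ⟨x, Prod.ext h1.symm h2.symm⟩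
      · rintro ⟨x, hx⟩
        exact ⟨x, (congrArg Prod.fst hx).symm, (congrArg Prod.snd hx).symm⟩
    rw [hgraph_eq]
    exact hgs.preimage (RegularOperators.cont_equivP_symm (A := A))
  -- dense adjoint domain
  have hpf := RegularOperators.pfRange_eq_adjDomain (A := A) t
  have hortho0 : ortho A (pfRange A t) = {0} := by
    ext y
    constructor
    · intro hy
      obtain ⟨u, hu, v, hv, heq⟩ := hoc ((WithCStarModule.equiv A (E × F)).symm (0, y))
      have hv2 : (WithCStarModule.equiv A (E × F) v).2 ∈ pfRange A t := ⟨v, hv, rfl⟩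
      have h1 : ⟪v, (WithCStarModule.equiv A (E × F)).symm (0, y)⟫_A = 0 := by
        rw [WithCStarModule.prod_inner]
        have e1 : ((WithCStarModule.equiv A (E × F)).symm ((0 : E), y)).1 = (0 : E) :=
          WithCStarModule.equiv_symm_fst _
        have e2 : ((WithCStarModule.equiv A (E × F)).symm ((0 : E), y)).2 = y :=
          WithCStarModule.equiv_symm_snd _
        rw [e1, e2, CStarModule.inner_zero_right, zero_add]
        have := hy _ hv2
        rwa [WithCStarModule.equiv_snd] at this
      have h2 : ⟪v, u⟫_A = 0 := by
        rw [← CStarModule.star_inner, hv u hu, star_zero]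
      have hvv : ⟪v, v⟫_A = 0 := by
        rw [heq, CStarModule.inner_add_right, h2, zero_add] at h1
        exact h1
      have hv0 : v = 0 := CStarModule.inner_self.mp hvv
      rw [hv0, add_zero] at heq
      obtain ⟨x, hx⟩ := hu
      rw [← heq, Equiv.apply_symm_apply] at hx
      have hx1 : (0 : E) = (x : E) := congrArg Prod.fst hx
      have hx2 : y = t x := congrArg Prod.snd hx
      have hx0 : x = 0 := Subtype.ext hx1.symm
      rw [hx2, hx0]
      exact Set.mem_singleton_iff.mpr (LinearPMap.map_zero t)
    · rintro rfl
      intro u _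
      exact CStarModule.inner_zero_right
  have hdensePf : Dense (pfRange A t) := by
    rw [dense_iff_closure_eq, hbi, hortho0]
    ext y
    simp [ortho]
  have hdenseAdj : Dense (S : Set F) := by
    have : (S : Set F) = pfRange A t := by rw [hpf]; rfl
    rw [this]
    exact hdensePf
  -- surjectivity of 1 + t*t
  have hsurj : ∀ z : E, z ∈ onePlusRange t s := by
    intro z
    obtain ⟨u, hu, v, hv, heq⟩ := hoc ((WithCStarModule.equiv A (E × F)).symm (z, 0))
    obtain ⟨x, hx⟩ := hu
    have hvmem := (RegularOperators.mem_ortho_graphSet (A := A)).mp hv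
    have heq' : (z, (0 : F)) = ((x : E) + (WithCStarModule.equiv A (E × F) v).1,
        t x + (WithCStarModule.equiv A (E × F) v).2) := by
      have h3 := congrArg (WithCStarModule.equiv A (E × F)) heq
      rw [Equiv.apply_symm_apply, WithCStarModule.equiv_add, hx] at h3
      exact h3
    have hz1 : z = (x : E) + (WithCStarModule.equiv A (E × F) v).1 := congrArg Prod.fst heq'
    have hz2 : t x = -(WithCStarModule.equiv A (E × F) v).2 := by
      have h4 : (0 : F) = t x + (WithCStarModule.equiv A (E × F) v).2 := congrArg Prod.snd heq'
      exact eq_neg_of_add_eq_zero_left h4.symm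
    have hv2mem : (WithCStarModule.equiv A (E × F) v).2 ∈ adjDomain A t := by
      rw [← hpf]
      exact ⟨v, hv, rfl⟩
    have htx : t x ∈ S := by
      rw [hz2]
      exact S.neg_mem hv2mem
    refine ⟨x, htx, ?_⟩
    have hval : f0 ⟨t x, htx⟩ = (WithCStarModule.equiv A (E × F) v).1 := by
      refine uniq fun x' => ?_
      rw [← hf0 ⟨t x, htx⟩ x']
      show ⟪t x', t x⟫_A = ⟪(x' : E), (WithCStarModule.equiv A (E × F) v).1⟫_A
      rw [hz2, CStarModule.inner_neg_right]
      have h5 := hvmem x'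
      exact (neg_eq_of_add_eq_zero_right ((add_comm _ _).trans h5)).symm ▸ rfl
    rw [hsapp ⟨t x, htx⟩, hval, ← hz1]
  refine ⟨s, ⟨hmod, hdense, hclosedGraph, ⟨rfl, fun x y => hf0 y x⟩, hdenseAdj, ?_⟩⟩
  rw [dense_iff_closure_eq]
  ext z
  simp only [Set.mem_univ, iff_true]
  exact subset_closure (hsurj z)

end Forward
section Backward

set_option maxHeartbeats 1000000 in
set_option synthInstance.maxHeartbeats 400000 in
lemma RegularOperators.backward (t : E →ₗ.[ℂ] F) (s : F →ₗ.[ℂ] E) (hreg : IsRegular A t s) :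
    OrthoComplemented A (graphSet A t) ∧
      closure (pfRange A t) = ortho A (ortho A (pfRange A t)) := by
  classical
  have hdense := hreg.denseDom
  have uniq : ∀ {z z' : E}, (∀ x : t.domain, ⟪(x : E), z⟫_A = ⟪(x : E), z'⟫_A) → z = z' := by
    intro z z' h
    exact RegularOperators.eq_of_inner_dense (A := A) hdense fun x hx => h ⟨x, hx⟩
  -- closedness of s
  have hsclosed : ∀ (y : ℕ → s.domain) (yl : F) (zl : E),
      Filter.Tendsto (fun n => ((y n : F))) Filter.atTop (nhds yl) →
      Filter.Tendsto (fun n => s (y n)) Filter.atTop (nhds zl) →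
      ∃ hyl : yl ∈ s.domain, s ⟨yl, hyl⟩ = zl := by
    intro y yl zl hy hz
    have key : ∀ x : t.domain, ⟪t x, yl⟫_A = ⟪(x : E), zl⟫_A := by
      intro x
      have l1 : Filter.Tendsto (fun n => ⟪t x, (y n : F)⟫_A) Filter.atTop (nhds ⟪t x, yl⟫_A) :=
        ((RegularOperators.cont_inner_right (t x)).tendsto yl).comp hy
      have l2 : Filter.Tendsto (fun n => ⟪(x : E), s (y n)⟫_A) Filter.atTop
          (nhds ⟪(x : E), zl⟫_A) :=
        ((RegularOperators.cont_inner_right ((x : E))).tendsto zl).comp hz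
      have l3 : (fun n => ⟪t x, (y n : F)⟫_A) = fun n => ⟪(x : E), s (y n)⟫_A :=
        funext fun n => hreg.adj.inner_eq x (y n)
      rw [l3] at l1
      exact tendsto_nhds_unique l1 l2
    have hyl : yl ∈ s.domain := by
      rw [← SetLike.mem_coe, hreg.adj.dom]
      exact ⟨zl, key⟩
    refine ⟨hyl, uniq fun x => ?_⟩
    rw [← hreg.adj.inner_eq x ⟨yl, hyl⟩]
    exact key x
  -- the basic estimates
  have est : ∀ (x : t.domain) (h : t x ∈ s.domain),
      ‖(x : E)‖ ≤ ‖(x : E) + s ⟨t x, h⟩‖ ∧ ‖t x‖ ≤ ‖(x : E) + s ⟨t x, h⟩‖ := by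
    intro x h
    set u := (x : E) + s ⟨t x, h⟩ with hu
    have key : ⟪(x : E), u⟫_A = ⟪(x : E), (x : E)⟫_A + ⟪t x, t x⟫_A := by
      rw [hu, CStarModule.inner_add_right, ← hreg.adj.inner_eq x ⟨t x, h⟩]
    have hxx : ‖(x : E)‖ ^ 2 ≤ ‖(x : E)‖ * ‖u‖ := by
      rw [CStarModule.norm_sq_eq (A := A)]
      refine le_trans (CStarAlgebra.norm_le_norm_of_nonneg_of_le
        CStarModule.inner_self_nonneg ?_) (CStarModule.norm_inner_le E)
      rw [key]
      exact le_add_of_nonneg_right CStarModule.inner_self_nonneg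
    have h1 : ‖(x : E)‖ ≤ ‖u‖ := by
      rcases eq_or_lt_of_le (norm_nonneg ((x : E))) with h0 | h0
      · rw [← h0]
        exact norm_nonneg u
      · nlinarith
    refine ⟨h1, ?_⟩
    have htt : ‖t x‖ ^ 2 ≤ ‖u‖ ^ 2 := by
      rw [CStarModule.norm_sq_eq (A := A)]
      calc ‖⟪t x, t x⟫_A‖ ≤ ‖⟪(x : E), u⟫_A‖ := by
            refine CStarAlgebra.norm_le_norm_of_nonneg_of_le CStarModule.inner_self_nonneg ?_
            rw [key]
            exact le_add_of_nonneg_left CStarModule.inner_self_nonneg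
        _ ≤ ‖(x : E)‖ * ‖u‖ := CStarModule.norm_inner_le E
        _ ≤ ‖u‖ * ‖u‖ := mul_le_mul_of_nonneg_right h1 (norm_nonneg u)
        _ = ‖u‖ ^ 2 := (sq ‖u‖).symm
    exact (pow_le_pow_iff_left₀ (norm_nonneg _) (norm_nonneg _) two_ne_zero).mp htt
  -- surjectivity of 1 + t*t
  have hsurj : ∀ z : E, ∃ (x : t.domain) (h : t x ∈ s.domain), (x : E) + s ⟨t x, h⟩ = z := by
    intro z
    obtain ⟨u, humem, hulim⟩ := mem_closure_iff_seq_limit.mp (hreg.denseOnePlusRange z)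
    choose xs hs hus using humem
    have hdiffmem : ∀ m n : ℕ, t (xs m - xs n) ∈ s.domain := by
      intro m n
      rw [LinearPMap.map_sub]
      exact s.domain.sub_mem (hs m) (hs n)
    have hdiff : ∀ m n : ℕ,
        ((xs m - xs n : t.domain) : E) + s ⟨t (xs m - xs n), hdiffmem m n⟩ = u m - u n := by
      intro m n
      have e1 : (⟨t (xs m - xs n), hdiffmem m n⟩ : s.domain)
          = ⟨t (xs m), hs m⟩ - ⟨t (xs n), hs n⟩ := by
        apply Subtype.ext
        simp [LinearPMap.map_sub]
      rw [e1, LinearPMap.map_sub, Submodule.coe_sub, ← hus m, ← hus n]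
      abel
    have hxc : CauchySeq (fun n => ((xs n : E))) := by
      refine RegularOperators.cauchy_dominate hulim.cauchySeq fun m n => ?_
      have := (est (xs m - xs n) (hdiffmem m n)).1
      rw [hdiff m n] at this
      simpa using this
    have htc : CauchySeq (fun n => t (xs n)) := by
      refine RegularOperators.cauchy_dominate hulim.cauchySeq fun m n => ?_
      have := (est (xs m - xs n) (hdiffmem m n)).2
      rw [hdiff m n, LinearPMap.map_sub] at this
      exact this
    obtain ⟨xl, hxl⟩ := cauchySeq_tendsto_of_complete hxc
    obtain ⟨yl, hyl⟩ := cauchySeq_tendsto_of_complete htc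
    have hgmem : (xl, yl) ∈ (t.graph : Set (E × F)) := by
      refine hreg.closedGraph.mem_of_tendsto (hxl.prodMk_nhds hyl)
        (Filter.Eventually.of_forall fun n => ?_)
      exact t.mem_graph (xs n)
    rw [SetLike.mem_coe, LinearPMap.mem_graph_iff] at hgmem
    obtain ⟨x', hx'1, hx'2⟩ := hgmem
    have hslim : Filter.Tendsto (fun n => s ⟨t (xs n), hs n⟩) Filter.atTop (nhds (z - xl)) := by
      have e2 : (fun n => s ⟨t (xs n), hs n⟩) = fun n => u n - ((xs n : E)) :=
        funext fun n => by rw [← hus n]; abel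
      rw [e2]
      exact hulim.sub hxl
    obtain ⟨hyls, hsyl⟩ := hsclosed (fun n => ⟨t (xs n), hs n⟩) yl (z - xl)
      (by simpa using hyl) hslim
    have hmem' : t x' ∈ s.domain := by rw [hx'2]; exact hyls
    refine ⟨x', hmem', ?_⟩
    have e3 : s ⟨t x', hmem'⟩ = z - xl := by
      rw [show (⟨t x', hmem'⟩ : s.domain) = ⟨yl, hyls⟩ from Subtype.ext hx'2]
      exact hsyl
    rw [e3, hx'1]
    abel
  -- the graph as a closed subset of the C*-module product
  have hgs : IsClosed (graphSet A t) := by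
    have e4 : graphSet A t = (fun w : C⋆ᵐᵒᵈ(A, E × F) => WithCStarModule.equiv A (E × F) w) ⁻¹'
        (t.graph : Set (E × F)) := by
      ext w
      simp only [Set.mem_preimage, graphSet, Set.mem_setOf_eq, SetLike.mem_coe,
        LinearPMap.mem_graph_iff]
      constructor
      · rintro ⟨x, hx⟩
        exact ⟨x, (congrArg Prod.fst hx).symm, (congrArg Prod.snd hx).symm⟩
      · rintro ⟨x, h1, h2⟩
        exact ⟨x, Prod.ext h1.symm h2.symm⟩
    rw [e4]
    exact hreg.closedGraph.preimage (RegularOperators.cont_equivP (A := A))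
  -- the flipped graph of s
  set G' : Set (C⋆ᵐᵒᵈ(A, E × F)) :=
    {w | ∃ y : s.domain, WithCStarModule.equiv A (E × F) w = (-(s y), (y : F))} with hG'def
  have hG'ortho : ∀ w ∈ G', w ∈ ortho A (graphSet A t) := by
    intro w hw
    obtain ⟨y, hy⟩ := hw
    rw [RegularOperators.mem_ortho_graphSet]
    intro x
    rw [congrArg Prod.fst hy, congrArg Prod.snd hy]
    rw [CStarModule.inner_neg_right, ← hreg.adj.inner_eq x y]
    exact neg_add_cancel _
  have hGsub : ∀ g₁ ∈ graphSet A t, ∀ g₂ ∈ graphSet A t, g₁ - g₂ ∈ graphSet A t := by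
    rintro g₁ ⟨x₁, hx₁⟩ g₂ ⟨x₂, hx₂⟩
    refine ⟨x₁ - x₂, ?_⟩
    rw [WithCStarModule.equiv_sub, hx₁, hx₂, LinearPMap.map_sub]
    rfl
  have hG'sub : ∀ w₁ ∈ G', ∀ w₂ ∈ G', w₁ - w₂ ∈ G' := by
    rintro w₁ ⟨y₁, hy₁⟩ w₂ ⟨y₂, hy₂⟩
    refine ⟨y₁ - y₂, ?_⟩
    rw [WithCStarModule.equiv_sub, hy₁, hy₂, LinearPMap.map_sub]
    apply Prod.ext
    · simp only [Prod.fst_sub]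
      abel
    · rfl
  -- the candidate decomposition set
  set M : Set (C⋆ᵐᵒᵈ(A, E × F)) := {p | ∃ g ∈ graphSet A t, ∃ w ∈ G', p = g + w} with hMdef
  have hMsub : ∀ p ∈ M, ∀ q ∈ M, p - q ∈ M := by
    rintro p ⟨g₁, hg₁, w₁, hw₁, rfl⟩ q ⟨g₂, hg₂, w₂, hw₂, rfl⟩
    exact ⟨g₁ - g₂, hGsub _ hg₁ _ hg₂, w₁ - w₂, hG'sub _ hw₁ _ hw₂, by abel⟩
  have hMclosed : IsClosed M := by
    refine isClosed_of_closure_subset fun p hp => ?_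
    obtain ⟨pn, hpn, hplim⟩ := mem_closure_iff_seq_limit.mp hp
    choose g hg w hw hpeq using hpn
    have horth : ∀ m n, ⟪g m - g n, w m - w n⟫_A = 0 := by
      intro m n
      have z1 : ∀ i j, ⟪g i, w j⟫_A = 0 := fun i j => hG'ortho (w j) (hw j) (g i) (hg i)
      rw [CStarModule.inner_sub_left, CStarModule.inner_sub_right,
        CStarModule.inner_sub_right, z1, z1, z1, z1]
      simp
    have hnormle : ∀ m n, ‖g m - g n‖ ≤ ‖pn m - pn n‖ := by
      intro m n
      have e5 : (g m - g n) + (w m - w n) = pn m - pn n := by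
        rw [hpeq m, hpeq n]; abel
      rw [← e5]
      exact RegularOperators.norm_le_add_of_orth (horth m n)
    have hgqc : CauchySeq (fun n => WithCStarModule.equiv A (E × F) (g n)) := by
      refine RegularOperators.cauchy_dominate hplim.cauchySeq fun m n => ?_
      rw [← WithCStarModule.equiv_sub]
      exact (WithCStarModule.norm_equiv_le_norm_prod _).trans (hnormle m n)
    obtain ⟨q, hq⟩ := cauchySeq_tendsto_of_complete hgqc
    have hglim : Filter.Tendsto g Filter.atTop
        (nhds ((WithCStarModule.equiv A (E × F)).symm q)) := by
      have e6 : g = fun n => (WithCStarModule.equiv A (E × F)).symm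
          (WithCStarModule.equiv A (E × F) (g n)) :=
        funext fun n => (Equiv.symm_apply_apply _ _).symm
      rw [e6]
      exact ((RegularOperators.cont_equivP_symm (A := A)).tendsto q).comp hq
    have hgmem : (WithCStarModule.equiv A (E × F)).symm q ∈ graphSet A t :=
      hgs.mem_of_tendsto hglim (Filter.Eventually.of_forall hg)
    have hwlim : Filter.Tendsto w Filter.atTop
        (nhds (p - (WithCStarModule.equiv A (E × F)).symm q)) := by
      have e7 : w = fun n => pn n - g n := funext fun n => by rw [hpeq n]; abel
      rw [e7]
      exact hplim.sub hglim
    choose ys hys using hw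
    have hwq : Filter.Tendsto (fun n => WithCStarModule.equiv A (E × F) (w n)) Filter.atTop
        (nhds (WithCStarModule.equiv A (E × F) (p - (WithCStarModule.equiv A (E × F)).symm q))) :=
      ((RegularOperators.cont_equivP (A := A)).tendsto _).comp hwlim
    have hsnd : Filter.Tendsto (fun n => ((ys n : F))) Filter.atTop
        (nhds ((WithCStarModule.equiv A (E × F)
          (p - (WithCStarModule.equiv A (E × F)).symm q)).2)) := by
      have h7 := (continuous_snd.tendsto _).comp hwq
      have e8 : ((fun r : E × F => r.2) ∘ fun n => WithCStarModule.equiv A (E × F) (w n))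
          = fun n => ((ys n : F)) := funext fun n => by simp [hys n]
      rwa [e8] at h7
    have hfst : Filter.Tendsto (fun n => s (ys n)) Filter.atTop
        (nhds (-(WithCStarModule.equiv A (E × F)
          (p - (WithCStarModule.equiv A (E × F)).symm q)).1)) := by
      have h8 := (continuous_fst.tendsto _).comp hwq
      have e9 : ((fun r : E × F => r.1) ∘ fun n => WithCStarModule.equiv A (E × F) (w n))
          = fun n => -(s (ys n)) := funext fun n => by simp [hys n]
      rw [e9] at h8
      have h9 := h8.neg
      simpa using h9
    obtain ⟨hymem, hyval⟩ := hsclosed ys _ _ hsnd hfst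
    have hwmem : p - (WithCStarModule.equiv A (E × F)).symm q ∈ G' := by
      refine ⟨⟨_, hymem⟩, ?_⟩
      apply Prod.ext
      · show _ = -(s ⟨_, hymem⟩)
        rw [hyval]
        simp
      · rfl
    exact ⟨_, hgmem, _, hwmem, by abel⟩
  -- E × {0} is contained in M
  have hEM : ∀ z : E, (WithCStarModule.equiv A (E × F)).symm (z, 0) ∈ M := by
    intro z
    obtain ⟨x, h, hx⟩ := hsurj z
    refine ⟨(WithCStarModule.equiv A (E × F)).symm ((x : E), t x), ⟨x, by simp⟩,
      (WithCStarModule.equiv A (E × F)).symm (s ⟨t x, h⟩, -(t x)),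
      ⟨-(⟨t x, h⟩ : s.domain), ?_⟩, ?_⟩
    · rw [Equiv.apply_symm_apply, LinearPMap.map_neg]
      simp
    · rw [← WithCStarModule.equiv_symm_add]
      congr 1
      rw [Prod.mk_add_mk, hx]
      simp
  -- {0} × F is contained in M
  have hFM : ∀ y : F, (WithCStarModule.equiv A (E × F)).symm (0, y) ∈ M := by
    have hWclosed : IsClosed {y : F | (WithCStarModule.equiv A (E × F)).symm (0, y) ∈ M} := by
      refine hMclosed.preimage ?_
      exact (RegularOperators.cont_equivP_symm (A := A)).comp
        (continuous_const.prodMk continuous_id)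
    have hWsup : (s.domain : Set F)
        ⊆ {y : F | (WithCStarModule.equiv A (E × F)).symm (0, y) ∈ M} := by
      intro y hy
      have h9 : (WithCStarModule.equiv A (E × F)).symm (-(s ⟨y, hy⟩), y) ∈ M :=
        ⟨0, ⟨0, by simp; rfl⟩, (WithCStarModule.equiv A (E × F)).symm (-(s ⟨y, hy⟩), y),
          ⟨⟨y, hy⟩, by rw [Equiv.apply_symm_apply]⟩, by rw [zero_add]⟩
      have h10 : (WithCStarModule.equiv A (E × F)).symm (-(s ⟨y, hy⟩), 0) ∈ M := hEM _
      have h11 := hMsub _ h9 _ h10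
      rw [← WithCStarModule.equiv_symm_sub] at h11
      simpa using h11
    have hWdense : Dense {y : F | (WithCStarModule.equiv A (E × F)).symm (0, y) ∈ M} :=
      hreg.denseAdjDom.mono hWsup
    intro y
    have h12 : {y : F | (WithCStarModule.equiv A (E × F)).symm (0, y) ∈ M} = Set.univ := by
      rw [← hWdense.closure_eq, hWclosed.closure_eq]
    exact (Set.eq_univ_iff_forall.mp h12) y
  have hGadd : ∀ g₁ ∈ graphSet A t, ∀ g₂ ∈ graphSet A t, g₁ + g₂ ∈ graphSet A t := by
    rintro g₁ ⟨x₁, hx₁⟩ g₂ ⟨x₂, hx₂⟩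
    refine ⟨x₁ + x₂, ?_⟩
    rw [WithCStarModule.equiv_add, hx₁, hx₂, LinearPMap.map_add]
    rfl
  have hG'add : ∀ w₁ ∈ G', ∀ w₂ ∈ G', w₁ + w₂ ∈ G' := by
    rintro w₁ ⟨y₁, hy₁⟩ w₂ ⟨y₂, hy₂⟩
    refine ⟨y₁ + y₂, ?_⟩
    rw [WithCStarModule.equiv_add, hy₁, hy₂, LinearPMap.map_add]
    apply Prod.ext
    · simp only [Prod.fst_add]
      abel
    · rfl
  have hMadd : ∀ p ∈ M, ∀ q ∈ M, p + q ∈ M := by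
    rintro p ⟨g₁, hg₁, w₁, hw₁, rfl⟩ q ⟨g₂, hg₂, w₂, hw₂, rfl⟩
    exact ⟨g₁ + g₂, hGadd _ hg₁ _ hg₂, w₁ + w₂, hG'add _ hw₁ _ hw₂, by abel⟩
  have hMuniv : ∀ p : C⋆ᵐᵒᵈ(A, E × F), p ∈ M := by
    intro p
    have h14 := hMadd _ (hEM (WithCStarModule.equiv A (E × F) p).1)
      _ (hFM (WithCStarModule.equiv A (E × F) p).2)
    rw [← WithCStarModule.equiv_symm_add] at h14
    have e10 : ((WithCStarModule.equiv A (E × F) p).1, (0 : F))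
        + ((0 : E), (WithCStarModule.equiv A (E × F) p).2) = WithCStarModule.equiv A (E × F) p := by
      simp [Prod.ext_iff]
    rw [e10, Equiv.symm_apply_apply] at h14
    exact h14
  constructor
  · intro z
    obtain ⟨g, hg, w, hw, rfl⟩ := hMuniv z
    exact ⟨g, hg, w, hG'ortho w hw, rfl⟩
  · have hsub : (s.domain : Set F) ⊆ pfRange A t := by
      intro y hy
      refine ⟨(WithCStarModule.equiv A (E × F)).symm (-(s ⟨y, hy⟩), y),
        hG'ortho _ ⟨⟨y, hy⟩, by simp⟩, by simp⟩
    exact RegularOperators.bi_eq_of_dense (A := A) (hreg.denseAdjDom.mono hsub)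

end Backward
/-- a densely defined `A`-linear operator `t` is regular iff its graph is
orthogonally complemented in `E ⊕ F` and the closure of `Ran(P_F P_{G(t)^⊥})` equals
its biorthogonal complement. -/
theorem isRegular_iff_graph_orthoComplemented (t : E →ₗ.[ℂ] F)
    (hmod : AModuleMap A t) (hdense : Dense (t.domain : Set E)) :
    (OrthoComplemented A (graphSet A t) ∧
        closure (pfRange A t) = ortho A (ortho A (pfRange A t))) ↔
      ∃ s : F →ₗ.[ℂ] E, IsRegular A t s := by
  constructor
  · rintro ⟨h1, h2⟩
    exact RegularOperators.forward t hmod hdense h1 h2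
  · rintro ⟨s, hs⟩
    exact RegularOperators.backward t s hs
end
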